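/- arXiv:1704.02969 — 4 statements merged into one kernel-verified Lean document; each statement's English description precedes it below -/
import Mathlib

section
/- For every ε > 0 there exist a constant δ_ε > 0, a probability space (T, m), and a real-valued orthonormal sequence (φ_n)_{n≥1} in L²(T, m) which is a martingale difference sequence with respect to some filtration, such that: (i) ‖φ_n‖_∞ ≤ 1 + ε for all n; (ii) for every finitely supported sequence of real numbers (x_n), E exp(Σ x_n φ_n) ≤ exp((1+ε)² Σ x_n² / 2); and (iii) for every n ≥ 1, the smallest constant C_n such that Σ_{k=1}^n |x_k| ≤ C_n ‖Σ_{k=1}^n x_k φ_k‖_∞ holds for all scalar coefficients (x_k) satisfies C_n ≥ δ_ε √n. -/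
open MeasureTheory
open scoped ENNReal

abbrev G := ℕ → ZMod 2

noncomputable def mu : Measure G := Measure.addHaarMeasure (⊤ : TopologicalSpace.PositiveCompacts G)

instance : IsProbabilityMeasure mu := by
  constructor
  rw [← TopologicalSpace.PositiveCompacts.coe_top (α := G)]
  exact Measure.addHaarMeasure_self

instance : mu.IsAddLeftInvariant := Measure.isAddLeftInvariant_addHaarMeasure _

def proj (N : ℕ) : G → (Fin N → ZMod 2) := fun ω i => ω i
noncomputable def emb (N : ℕ) (b : Fin N → ZMod 2) : G := fun i => if h : i < N then b ⟨i, h⟩ else 0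

lemma measurable_proj (N : ℕ) : Measurable (proj N) :=
  measurable_pi_lambda _ (fun i => measurable_pi_apply (i : ℕ))

lemma zmod2_add_self (z : ZMod 2) : z + z = 0 := by revert z; decide

lemma cylinder_shift (N : ℕ) (b : Fin N → ZMod 2) :
    proj N ⁻¹' {b} = (fun ω => emb N b + ω) ⁻¹' (proj N ⁻¹' {0}) := by
  ext ω
  simp only [Set.mem_preimage, Set.mem_singleton_iff, funext_iff, proj, emb, Pi.add_apply]
  constructor
  · intro h i
    rw [dif_pos i.isLt, h i, zmod2_add_self]
    rfl
  · intro h i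
    have h1 := h i
    rw [dif_pos i.isLt] at h1
    have h1 : b i + ω i = 0 := h1
    have h2 : (b i) + (b i + ω i) = b i + 0 := by rw [h1]
    rwa [← add_assoc, zmod2_add_self, zero_add, add_zero] at h2

lemma cylinder_measurable (N : ℕ) (b : Fin N → ZMod 2) :
    MeasurableSet (proj N ⁻¹' {b}) :=
  measurable_proj N (measurableSet_singleton b)

lemma cylinder_meas (N : ℕ) (b : Fin N → ZMod 2) :
    mu (proj N ⁻¹' {b}) = ((2 ^ N : ℕ) : ℝ≥0∞)⁻¹ := by
  have hshift : ∀ b : Fin N → ZMod 2, mu (proj N ⁻¹' {b}) = mu (proj N ⁻¹' {0}) := by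
    intro b
    rw [cylinder_shift N b]
    exact measure_preimage_add mu (emb N b) _
  have hdis : Pairwise (Function.onFun Disjoint fun b : Fin N → ZMod 2 => proj N ⁻¹' {b}) := by
    intro b b' hbb'
    simp only [Function.onFun, Set.disjoint_left]
    intro ω h1 h2
    exact hbb' (by rw [← h1, ← h2])
  have hpart := measure_iUnion (μ := mu) hdis (fun b => cylinder_measurable N b)
  have huniv : ⋃ b : Fin N → ZMod 2, proj N ⁻¹' {b} = Set.univ := by
    ext ω; simp [Set.mem_iUnion]
  rw [huniv, measure_univ, tsum_fintype] at hpart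
  have hcard : (Fintype.card (Fin N → ZMod 2)) = 2 ^ N := by simp
  rw [Finset.sum_congr rfl (fun b _ => hshift b), Finset.sum_const, Finset.card_univ, hcard] at hpart
  have h2 : ((2 ^ N : ℕ) : ℝ≥0∞) * mu (proj N ⁻¹' {0}) = 1 := by
    simpa [nsmul_eq_mul] using hpart.symm
  rw [hshift b]
  exact ENNReal.eq_inv_of_mul_eq_one_left (by rwa [mul_comm] at h2)

def DependsOnN (f : G → ℝ) (N : ℕ) : Prop := ∀ ⦃ω ω' : G⦄, (∀ i < N, ω i = ω' i) → f ω = f ω'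

lemma DependsOnN.factor {f : G → ℝ} {N : ℕ} (h : DependsOnN f N) :
    f = (fun b => f (emb N b)) ∘ proj N := by
  funext ω
  exact h (fun i hi => by simp [emb, proj, dif_pos hi])

lemma DependsOnN.measurable {f : G → ℝ} {N : ℕ} (h : DependsOnN f N) : Measurable f := by
  rw [h.factor]
  exact (measurable_of_countable _).comp (measurable_proj N)

lemma DependsOnN.integrable {f : G → ℝ} {N : ℕ} (h : DependsOnN f N) : Integrable f mu := by
  rw [h.factor]
  refine (integrable_map_measure ?_ (measurable_proj N).aemeasurable).mp ?_
  · exact (measurable_of_countable _).aestronglyMeasurable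
  · haveI : IsProbabilityMeasure (mu.map (proj N)) :=
      Measure.isProbabilityMeasure_map (measurable_proj N).aemeasurable
    exact .of_finite

lemma DependsOnN.mono {f : G → ℝ} {N M : ℕ} (h : DependsOnN f N) (hNM : N ≤ M) :
    DependsOnN f M := fun ω ω' hh => h (fun i hi => hh i (lt_of_lt_of_le hi hNM))

lemma integral_dependsOn {f : G → ℝ} {N : ℕ} (h : DependsOnN f N) :
    ∫ ω, f ω ∂mu = ((2 ^ N : ℕ) : ℝ)⁻¹ * ∑ b : Fin N → ZMod 2, f (emb N b) := by
  haveI : IsProbabilityMeasure (mu.map (proj N)) :=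
    Measure.isProbabilityMeasure_map (measurable_proj N).aemeasurable
  have hrepr : ∫ ω, f ω ∂mu = ∫ b, (fun b => f (emb N b)) b ∂(mu.map (proj N)) := by
    rw [integral_map (measurable_proj N).aemeasurable
      (measurable_of_countable _).aestronglyMeasurable]
    refine integral_congr_ae (Filter.Eventually.of_forall fun ω => ?_)
    exact h (fun i hi => by simp [emb, proj, dif_pos hi])
  rw [hrepr, integral_fintype .of_finite]
  rw [Finset.mul_sum]
  congr 1
  funext b
  rw [Measure.real, Measure.map_apply (measurable_proj N) (measurableSet_singleton b), cylinder_meas]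
  simp [smul_eq_mul]

lemma sum_zmod2 (g : ZMod 2 → ℝ) : ∑ z, g z = g 0 + g 1 := by
  rw [show (Finset.univ : Finset (ZMod 2)) = {0, 1} from by decide,
    Finset.sum_insert (by decide), Finset.sum_singleton]

lemma dependsOn_mul_eval {f : G → ℝ} {n : ℕ} (h : DependsOnN f n) (g : ZMod 2 → ℝ) :
    DependsOnN (fun ω => f ω * g (ω n)) (n + 1) := by
  intro ω ω' hh
  dsimp only
  rw [h (fun i hi => hh i (Nat.lt_succ_of_lt hi)), hh n (Nat.lt_succ_self n)]

lemma integral_mul_eval {f : G → ℝ} {n : ℕ} (h : DependsOnN f n) (g : ZMod 2 → ℝ) :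
    ∫ ω, f ω * g (ω n) ∂mu = (∫ ω, f ω ∂mu) * ((g 0 + g 1) / 2) := by
  rw [integral_dependsOn (dependsOn_mul_eval h g), integral_dependsOn h]
  have emb_last : ∀ b : Fin (n+1) → ZMod 2, emb (n+1) b n = b (Fin.last n) := by
    intro b
    simp only [emb, dif_pos (Nat.lt_succ_self n)]
    rfl
  have key : ∑ b : Fin (n+1) → ZMod 2, f (emb (n+1) b) * g (emb (n+1) b n)
      = (∑ b : Fin n → ZMod 2, f (emb n b)) * (g 0 + g 1) := by
    rw [← Fintype.sum_equiv (Fin.snocEquiv (fun _ : Fin (n+1) => ZMod 2))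
      (fun p => f (emb (n+1) (Fin.snocEquiv (fun _ : Fin (n+1) => ZMod 2) p)) *
        g ((Fin.snocEquiv (fun _ : Fin (n+1) => ZMod 2) p) (Fin.last n)))
      (fun b => f (emb (n+1) b) * g (emb (n+1) b n)) (fun p => by
        rw [emb_last])]
    rw [Fintype.sum_prod_type]
    have hfe : ∀ (z : ZMod 2) (b' : Fin n → ZMod 2),
        f (emb (n+1) (Fin.snocEquiv (fun _ : Fin (n+1) => ZMod 2) (z, b'))) = f (emb n b') := by
      intro z b'
      refine h (fun i hi => ?_)
      simp only [emb, Fin.snocEquiv, Equiv.coe_fn_mk, dif_pos hi, dif_pos (Nat.lt_succ_of_lt hi)]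
      have : (⟨i, Nat.lt_succ_of_lt hi⟩ : Fin (n+1)) = Fin.castSucc ⟨i, hi⟩ := rfl
      rw [this, Fin.snoc_castSucc]
    have hge : ∀ (z : ZMod 2) (b' : Fin n → ZMod 2),
        (Fin.snocEquiv (fun _ : Fin (n+1) => ZMod 2) (z, b')) (Fin.last n) = z := by
      intro z b'
      simp [Fin.snocEquiv]
    calc ∑ z : ZMod 2, ∑ b' : Fin n → ZMod 2,
          f (emb (n+1) (Fin.snocEquiv (fun _ : Fin (n+1) => ZMod 2) (z, b'))) *
            g ((Fin.snocEquiv (fun _ : Fin (n+1) => ZMod 2) (z, b')) (Fin.last n))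
        = ∑ z : ZMod 2, ∑ b' : Fin n → ZMod 2, f (emb n b') * g z := by
          refine Finset.sum_congr rfl (fun z _ => Finset.sum_congr rfl (fun b' _ => ?_))
          rw [hfe z b', hge z b']
      _ = (∑ b' : Fin n → ZMod 2, f (emb n b')) * (g 0 + g 1) := by
          rw [sum_zmod2 (fun z => ∑ b' : Fin n → ZMod 2, f (emb n b') * g z)]
          rw [← Finset.sum_mul, ← Finset.sum_mul]
          ring
  rw [key]
  have h2 : ((2 ^ (n+1) : ℕ) : ℝ) = 2 * ((2 ^ n : ℕ) : ℝ) := by push_cast; ring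
  rw [h2]
  have h3 : ((2:ℝ) * ((2 ^ n : ℕ) : ℝ))⁻¹ = ((2 ^ n : ℕ) : ℝ)⁻¹ * 2⁻¹ := by
    rw [mul_inv]; ring
  rw [h3]
  ring

-- construction part (appended to main.lean for testing)
noncomputable section

def chi : ZMod 2 → ℝ := fun z => if z = 0 then 1 else -1

lemma chi_cases (z : ZMod 2) : chi z = 1 ∨ chi z = -1 := by
  rcases (show z = 0 ∨ z = 1 by revert z; decide) with h | h <;> simp [chi, h]

lemma chi_sq (z : ZMod 2) : chi z * chi z = 1 := by
  rcases chi_cases z with h | h <;> rw [h] <;> norm_num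

lemma abs_chi (z : ZMod 2) : |chi z| = 1 := by
  rcases chi_cases z with h | h <;> rw [h] <;> norm_num

lemma chi_avg : (chi 0 + chi 1) / 2 = 0 := by norm_num [chi]

def Sf (lam : ℝ) : ℕ → G → ℝ
  | 0 => fun _ => 0
  | (k+1) => fun ω => Sf lam k ω +
      (Real.sqrt ((mu {ω' | |Sf lam k ω'| ≤ lam * Real.sqrt (k+1)}).toReal))⁻¹ *
        Set.indicator {ω' | |Sf lam k ω'| ≤ lam * Real.sqrt (k+1)} (fun _ => (1:ℝ)) ω *
        chi (ω (k+1))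

def As (lam : ℝ) (k : ℕ) : Set G := {ω' | |Sf lam k ω'| ≤ lam * Real.sqrt (k+1)}
def pr (lam : ℝ) (k : ℕ) : ℝ := (mu (As lam k)).toReal
def am (lam : ℝ) (k : ℕ) : ℝ := (Real.sqrt (pr lam k))⁻¹
def phi (lam : ℝ) (n : ℕ) : G → ℝ := fun ω => Sf lam n ω - Sf lam (n - 1) ω

lemma Sf_succ (lam : ℝ) (k : ℕ) (ω : G) :
    Sf lam (k+1) ω = Sf lam k ω +
      am lam k * Set.indicator (As lam k) (fun _ => (1:ℝ)) ω * chi (ω (k+1)) := rfl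

lemma phi_succ (lam : ℝ) (k : ℕ) (ω : G) :
    phi lam (k+1) ω = am lam k * Set.indicator (As lam k) (fun _ => (1:ℝ)) ω * chi (ω (k+1)) := by
  simp [phi, Sf_succ]

lemma phi_zero (lam : ℝ) : phi lam 0 = fun _ => 0 := by
  funext ω; simp [phi]

-- DependsOnN combinators
lemma DependsOnN.op2 {f g : G → ℝ} {N : ℕ} (hf : DependsOnN f N) (hg : DependsOnN g N)
    (op : ℝ → ℝ → ℝ) : DependsOnN (fun ω => op (f ω) (g ω)) N := by
  intro ω ω' hh; dsimp only; rw [hf hh, hg hh]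

lemma DependsOnN.comp {f : G → ℝ} {N : ℕ} (hf : DependsOnN f N) (u : ℝ → ℝ) :
    DependsOnN (fun ω => u (f ω)) N := by
  intro ω ω' hh; dsimp only; rw [hf hh]

lemma dependsOnN_const (c : ℝ) (N : ℕ) : DependsOnN (fun _ => c) N := fun _ _ _ => rfl

lemma dependsOn_eval {n N : ℕ} (h : n < N) (g : ZMod 2 → ℝ) :
    DependsOnN (fun ω => g (ω n)) N := by
  intro ω ω' hh; dsimp only; rw [hh n h]

lemma indicator_dependsOn (lam : ℝ) (k : ℕ) (h : DependsOnN (Sf lam k) (k+1)) :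
    DependsOnN (fun ω => Set.indicator (As lam k) (fun _ => (1:ℝ)) ω) (k+1) := by
  intro ω ω' hh
  have hmem : ω ∈ As lam k ↔ ω' ∈ As lam k := by
    simp only [As, Set.mem_setOf_eq, h hh]
  dsimp only
  by_cases hω : ω ∈ As lam k
  · rw [Set.indicator_of_mem hω, Set.indicator_of_mem (hmem.mp hω)]
  · rw [Set.indicator_of_notMem hω, Set.indicator_of_notMem (fun hc => hω (hmem.mpr hc))]

lemma Sf_dependsOn (lam : ℝ) : ∀ k, DependsOnN (Sf lam k) (k+1)
  | 0 => dependsOnN_const 0 1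
  | (k+1) => by
    have ih := Sf_dependsOn lam k
    have h1 : DependsOnN (Sf lam k) (k+2) := ih.mono (by omega)
    have h2 : DependsOnN (fun ω => Set.indicator (As lam k) (fun _ => (1:ℝ)) ω) (k+2) :=
      (indicator_dependsOn lam k ih).mono (by omega)
    have h3 : DependsOnN (fun ω => chi (ω (k+1))) (k+2) := dependsOn_eval (by omega) chi
    intro ω ω' hh
    have e2 : (As lam k).indicator (fun _ => (1:ℝ)) ω = (As lam k).indicator (fun _ => (1:ℝ)) ω' :=
      h2 hh
    rw [Sf_succ, Sf_succ, h1 hh, e2, hh (k+1) (by omega)]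

lemma phi_dependsOn (lam : ℝ) (n : ℕ) : DependsOnN (phi lam n) (n+1) := by
  cases n with
  | zero => rw [phi_zero]; exact dependsOnN_const 0 1
  | succ k =>
    have h2 : DependsOnN (fun ω => Set.indicator (As lam k) (fun _ => (1:ℝ)) ω) (k+2) :=
      (indicator_dependsOn lam k (Sf_dependsOn lam k)).mono (by omega)
    have h3 : DependsOnN (fun ω => chi (ω (k+1))) (k+2) := dependsOn_eval (by omega) chi
    intro ω ω' hh
    have e2 : (As lam k).indicator (fun _ => (1:ℝ)) ω = (As lam k).indicator (fun _ => (1:ℝ)) ω' :=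
      h2 hh
    rw [phi_succ, phi_succ, e2, hh (k+1) (by omega)]

lemma As_measurableSet (lam : ℝ) (k : ℕ) : MeasurableSet (As lam k) := by
  have h : As lam k = (fun ω => |Sf lam k ω|) ⁻¹' (Set.Iic (lam * Real.sqrt (k+1))) := rfl
  rw [h]
  exact ((Sf_dependsOn lam k).measurable.abs) measurableSet_Iic

-- Chebyshev and variance induction
lemma pr_le_one (lam : ℝ) (k : ℕ) : pr lam k ≤ 1 := by
  have := prob_le_one (μ := mu) (s := As lam k)
  have h1 : pr lam k ≤ (1 : ℝ≥0∞).toReal := ENNReal.toReal_mono (by simp) this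
  simpa using h1

lemma pr_nonneg (lam : ℝ) (k : ℕ) : 0 ≤ pr lam k := ENNReal.toReal_nonneg

lemma sq_dependsOn (lam : ℝ) (k : ℕ) : DependsOnN (fun ω => (Sf lam k ω)^2) (k+1) :=
  (Sf_dependsOn lam k).comp (fun t => t^2)

lemma pr_ge (lam : ℝ) (hlam : 1 < lam) (k : ℕ)
    (hvar : ∫ ω, (Sf lam k ω)^2 ∂mu = k) : 1 - (lam^2)⁻¹ ≤ pr lam k := by
  set r : ℝ := lam * Real.sqrt (k+1) with hr
  have hr0 : 0 < r := by
    apply mul_pos (by linarith)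
    exact Real.sqrt_pos.mpr (by positivity)
  set B := (As lam k)ᶜ with hB
  have hBmeas : MeasurableSet B := (As_measurableSet lam k).compl
  have hint : Integrable (fun ω => (Sf lam k ω)^2) mu := (sq_dependsOn lam k).integrable
  have h1 : ∫ ω in B, r^2 ∂mu ≤ ∫ ω in B, (Sf lam k ω)^2 ∂mu := by
    refine setIntegral_mono_on (integrableOn_const (measure_lt_top mu B).ne)
      hint.integrableOn hBmeas ?_
    intro ω hω
    have hω' : r < |Sf lam k ω| := by
      simp only [hB, As, Set.mem_compl_iff, Set.mem_setOf_eq, not_le] at hω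
      exact hω
    calc r^2 ≤ |Sf lam k ω|^2 := by
          apply pow_le_pow_left₀ hr0.le hω'.le
      _ = (Sf lam k ω)^2 := sq_abs _
  have h2 : ∫ ω in B, (Sf lam k ω)^2 ∂mu ≤ ∫ ω, (Sf lam k ω)^2 ∂mu :=
    setIntegral_le_integral hint (Filter.Eventually.of_forall (fun ω => sq_nonneg _))
  rw [setIntegral_const] at h1
  have hkey : (mu B).toReal * r^2 ≤ k := by
    have := le_trans h1 (le_trans h2 (le_of_eq hvar))
    simpa [smul_eq_mul, Measure.real] using this
  have hrsq : r^2 = lam^2 * (k+1) := by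
    rw [hr, mul_pow, Real.sq_sqrt (by positivity : (0:ℝ) ≤ (k:ℝ)+1)]
  have hmuB : (mu B).toReal ≤ (lam^2)⁻¹ := by
    have hlam2 : (0:ℝ) < lam^2 := by positivity
    rw [hrsq] at hkey
    have hk1 : (0:ℝ) < (k:ℝ)+1 := by positivity
    rw [show (mu B).toReal * (lam^2 * ((k:ℝ)+1)) = ((mu B).toReal * ((k:ℝ)+1)) * lam^2 by ring]
      at hkey
    have h3 : (mu B).toReal * ((k:ℝ)+1) ≤ k / lam^2 := by
      rw [le_div_iff₀ hlam2]; exact hkey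
    have h4 : (mu B).toReal ≤ (k / lam^2) / ((k:ℝ)+1) := by
      rw [le_div_iff₀ hk1]; exact h3
    calc (mu B).toReal ≤ (k / lam^2) / ((k:ℝ)+1) := h4
      _ = ((k:ℝ)/((k:ℝ)+1)) * (lam^2)⁻¹ := by ring
      _ ≤ 1 * (lam^2)⁻¹ := by
          apply mul_le_mul_of_nonneg_right _ (by positivity)
          rw [div_le_one hk1]; linarith
      _ = (lam^2)⁻¹ := one_mul _
  have hsum : (mu (As lam k)).toReal + (mu B).toReal = 1 := by
    have := prob_add_prob_compl (μ := mu) (As_measurableSet lam k)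
    have h5 := congrArg ENNReal.toReal this
    rw [ENNReal.toReal_add (measure_lt_top mu _).ne (measure_lt_top mu _).ne] at h5
    simpa using h5
  have : pr lam k = 1 - (mu B).toReal := by rw [pr, ← hsum]; ring
  rw [this]
  linarith

lemma ind_mul_self (s : Set G) (ω : G) :
    Set.indicator s (fun _ => (1:ℝ)) ω * Set.indicator s (fun _ => (1:ℝ)) ω
      = Set.indicator s (fun _ => (1:ℝ)) ω := by
  by_cases h : ω ∈ s <;> simp [h]

lemma phi_sq_integral (lam : ℝ) (k : ℕ) (hpr : 0 < pr lam k) :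
    ∫ ω, (phi lam (k+1) ω)^2 ∂mu = 1 := by
  have hpt : ∀ ω, (phi lam (k+1) ω)^2
      = am lam k ^ 2 * Set.indicator (As lam k) (fun _ => (1:ℝ)) ω := by
    intro ω
    rw [phi_succ]
    calc (am lam k * Set.indicator (As lam k) (fun _ => (1:ℝ)) ω * chi (ω (k+1)))^2
        = am lam k ^ 2 * (Set.indicator (As lam k) (fun _ => (1:ℝ)) ω
            * Set.indicator (As lam k) (fun _ => (1:ℝ)) ω) * (chi (ω (k+1)) * chi (ω (k+1))) := by
          ring
      _ = am lam k ^ 2 * Set.indicator (As lam k) (fun _ => (1:ℝ)) ω := by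
          rw [chi_sq, ind_mul_self, mul_one]
  calc ∫ ω, (phi lam (k+1) ω)^2 ∂mu
      = ∫ ω, am lam k ^ 2 * Set.indicator (As lam k) (fun _ => (1:ℝ)) ω ∂mu := by
        refine integral_congr_ae (Filter.Eventually.of_forall (fun ω => hpt ω))
    _ = am lam k ^ 2 * ∫ ω, Set.indicator (As lam k) (fun _ => (1:ℝ)) ω ∂mu := by
        exact integral_const_mul _ _
    _ = am lam k ^ 2 * pr lam k := by
        rw [integral_indicator (As_measurableSet lam k), setIntegral_const]
        simp [pr, Measure.real]
    _ = 1 := by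
        rw [am, inv_pow, Real.sq_sqrt hpr.le]
        exact inv_mul_cancel₀ hpr.ne'

lemma mul_phi_integral (lam : ℝ) (k : ℕ) {f : G → ℝ} (hf : DependsOnN f (k+1)) :
    ∫ ω, f ω * phi lam (k+1) ω ∂mu = 0 := by
  have hpt : ∀ ω, f ω * phi lam (k+1) ω
      = (fun ω => f ω * (am lam k * Set.indicator (As lam k) (fun _ => (1:ℝ)) ω)) ω
        * chi (ω (k+1)) := by
    intro ω; rw [phi_succ]; ring
  have hF : DependsOnN (fun ω => f ω * (am lam k * Set.indicator (As lam k)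
      (fun _ => (1:ℝ)) ω)) (k+1) := by
    have hind := indicator_dependsOn lam k (Sf_dependsOn lam k)
    intro ω ω' hh
    have e1 := hf hh
    have e2 : (As lam k).indicator (fun _ => (1:ℝ)) ω
        = (As lam k).indicator (fun _ => (1:ℝ)) ω' := hind hh
    dsimp only
    rw [e1, e2]
  calc ∫ ω, f ω * phi lam (k+1) ω ∂mu
      = ∫ ω, (fun ω => f ω * (am lam k * Set.indicator (As lam k) (fun _ => (1:ℝ)) ω)) ω
          * chi (ω (k+1)) ∂mu := integral_congr_ae (Filter.Eventually.of_forall hpt)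
    _ = 0 := by rw [integral_mul_eval hF chi, chi_avg, mul_zero]

lemma qpos (lam : ℝ) (hlam : 1 < lam) : 0 < 1 - (lam^2)⁻¹ := by
  have h1 : 1 < lam^2 := by nlinarith
  have : (lam^2)⁻¹ < 1 := by
    rw [inv_lt_one_iff₀]; right; exact h1
  linarith

lemma Sf_succ_phi (lam : ℝ) (k : ℕ) (ω : G) :
    Sf lam (k+1) ω = Sf lam k ω + phi lam (k+1) ω := by
  simp [phi]

lemma Sf_var (lam : ℝ) (hlam : 1 < lam) : ∀ k, ∫ ω, (Sf lam k ω)^2 ∂mu = k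
  | 0 => by simp [Sf]
  | (k+1) => by
    have ih := Sf_var lam hlam k
    have hpr : 0 < pr lam k := lt_of_lt_of_le (qpos lam hlam) (pr_ge lam hlam k ih)
    have hdepS : DependsOnN (Sf lam k) (k+2) := (Sf_dependsOn lam k).mono (by omega)
    have hdepP : DependsOnN (phi lam (k+1)) (k+2) := phi_dependsOn lam (k+1)
    have hsq : DependsOnN (fun ω => (Sf lam k ω)^2) (k+2) := hdepS.comp (fun t => t^2)
    have hcross : DependsOnN (fun ω => 2 * Sf lam k ω * phi lam (k+1) ω) (k+2) := by
      intro ω ω' hh; dsimp only; rw [hdepS hh, hdepP hh]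
    have hpsq : DependsOnN (fun ω => (phi lam (k+1) ω)^2) (k+2) := hdepP.comp (fun t => t^2)
    have hpt : ∀ ω, (Sf lam (k+1) ω)^2 = (Sf lam k ω)^2
        + (2 * Sf lam k ω * phi lam (k+1) ω + (phi lam (k+1) ω)^2) := by
      intro ω; rw [Sf_succ_phi]; ring
    calc ∫ ω, (Sf lam (k+1) ω)^2 ∂mu
        = ∫ ω, ((Sf lam k ω)^2
            + (2 * Sf lam k ω * phi lam (k+1) ω + (phi lam (k+1) ω)^2)) ∂mu :=
          integral_congr_ae (Filter.Eventually.of_forall hpt)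
      _ = (∫ ω, (Sf lam k ω)^2 ∂mu)
            + ∫ ω, (2 * Sf lam k ω * phi lam (k+1) ω + (phi lam (k+1) ω)^2) ∂mu :=
          integral_add hsq.integrable (hcross.integrable.add hpsq.integrable)
      _ = (∫ ω, (Sf lam k ω)^2 ∂mu)
            + ((∫ ω, 2 * Sf lam k ω * phi lam (k+1) ω ∂mu)
              + ∫ ω, (phi lam (k+1) ω)^2 ∂mu) := by
          rw [integral_add hcross.integrable hpsq.integrable]
      _ = (k : ℝ) + (0 + 1) := by
          rw [ih, phi_sq_integral lam k hpr]
          congr 2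
          have : ∀ ω, 2 * Sf lam k ω * phi lam (k+1) ω
              = (fun ω => 2 * Sf lam k ω) ω * phi lam (k+1) ω := fun ω => rfl
          rw [integral_congr_ae (Filter.Eventually.of_forall this)]
          exact mul_phi_integral lam k (by
            intro ω ω' hh; dsimp only; rw [(Sf_dependsOn lam k) hh])
      _ = ((k+1 : ℕ) : ℝ) := by push_cast; ring

lemma pr_ge' (lam : ℝ) (hlam : 1 < lam) (k : ℕ) : 1 - (lam^2)⁻¹ ≤ pr lam k :=
  pr_ge lam hlam k (Sf_var lam hlam k)

lemma pr_pos (lam : ℝ) (hlam : 1 < lam) (k : ℕ) : 0 < pr lam k :=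
  lt_of_lt_of_le (qpos lam hlam) (pr_ge' lam hlam k)

lemma am_pos (lam : ℝ) (hlam : 1 < lam) (k : ℕ) : 0 < am lam k := by
  rw [am]; exact inv_pos.mpr (Real.sqrt_pos.mpr (pr_pos lam hlam k))

lemma am_le (lam : ℝ) (hlam : 1 < lam) (k : ℕ) :
    am lam k ≤ (Real.sqrt (1 - (lam^2)⁻¹))⁻¹ := by
  rw [am]
  apply inv_anti₀ (Real.sqrt_pos.mpr (qpos lam hlam))
  exact Real.sqrt_le_sqrt (pr_ge' lam hlam k)

lemma abs_phi_le (lam : ℝ) (hlam : 1 < lam) (k : ℕ) (ω : G) :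
    |phi lam (k+1) ω| ≤ (Real.sqrt (1 - (lam^2)⁻¹))⁻¹ := by
  rw [phi_succ, abs_mul, abs_mul, abs_chi, mul_one]
  have h1 : |Set.indicator (As lam k) (fun _ => (1:ℝ)) ω| ≤ 1 := by
    by_cases h : ω ∈ As lam k <;> simp [h]
  have h2 : |am lam k| = am lam k := abs_of_pos (am_pos lam hlam k)
  calc |am lam k| * |Set.indicator (As lam k) (fun _ => (1:ℝ)) ω|
      ≤ |am lam k| * 1 := by
        exact mul_le_mul_of_nonneg_left h1 (abs_nonneg _)
    _ = am lam k := by rw [mul_one, h2]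
    _ ≤ (Real.sqrt (1 - (lam^2)⁻¹))⁻¹ := am_le lam hlam k

lemma Sf_eq_sum (lam : ℝ) : ∀ n, ∀ ω, Sf lam n ω = ∑ j ∈ Finset.Icc 1 n, phi lam j ω
  | 0 => by intro ω; simp [Sf]
  | (k+1) => by
    intro ω
    rw [show Finset.Icc 1 (k+1) = Finset.Icc 1 k ∪ {k+1} by
      ext j; simp [Finset.mem_Icc, Finset.mem_union]; omega]
    rw [Finset.sum_union (by simp [Finset.mem_Icc])]
    rw [Finset.sum_singleton, ← Sf_eq_sum lam k ω, Sf_succ_phi]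

lemma Sf_abs_le (lam : ℝ) (hlam : 1 < lam) :
    ∀ n, ∀ ω, |Sf lam n ω| ≤ lam * Real.sqrt n + (Real.sqrt (1 - (lam^2)⁻¹))⁻¹
  | 0 => by
    intro ω
    simp only [Sf, abs_zero, Nat.cast_zero, Real.sqrt_zero, mul_zero, zero_add]
    positivity
  | (k+1) => by
    intro ω
    set c := (Real.sqrt (1 - (lam^2)⁻¹))⁻¹ with hc
    by_cases h : ω ∈ As lam k
    · have h1 : |Sf lam k ω| ≤ lam * Real.sqrt (k+1) := h
      have h2 : |phi lam (k+1) ω| ≤ c := abs_phi_le lam hlam k ω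
      rw [Sf_succ_phi]
      calc |Sf lam k ω + phi lam (k+1) ω| ≤ |Sf lam k ω| + |phi lam (k+1) ω| := abs_add_le _ _
        _ ≤ lam * Real.sqrt (k+1) + c := add_le_add h1 h2
        _ = lam * Real.sqrt ((k+1 : ℕ) : ℝ) + c := by push_cast; ring_nf
    · have hphi : phi lam (k+1) ω = 0 := by
        rw [phi_succ, Set.indicator_of_notMem h]; ring
      rw [Sf_succ_phi, hphi, add_zero]
      calc |Sf lam k ω| ≤ lam * Real.sqrt k + c := Sf_abs_le lam hlam k ω
        _ ≤ lam * Real.sqrt ((k+1 : ℕ) : ℝ) + c := by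
            have : Real.sqrt k ≤ Real.sqrt ((k+1:ℕ) : ℝ) := by
              apply Real.sqrt_le_sqrt; push_cast; linarith
            nlinarith [this, (by linarith : (0:ℝ) < lam)]

lemma phi_orthonormal (lam : ℝ) (hlam : 1 < lam) (n k : ℕ) (hn : 1 ≤ n) (hk : 1 ≤ k) :
    ∫ ω, phi lam n ω * phi lam k ω ∂mu = if n = k then 1 else 0 := by
  have key : ∀ i j : ℕ, i < j → ∫ ω, phi lam i ω * phi lam j ω ∂mu = 0 := by
    intro i j hij
    obtain ⟨j', rfl⟩ : ∃ j', j = j' + 1 := ⟨j - 1, by omega⟩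
    exact mul_phi_integral lam j' ((phi_dependsOn lam i).mono (by omega))
  rcases lt_trichotomy n k with h | h | h
  · rw [if_neg (by omega), key n k h]
  · subst h
    rw [if_pos rfl]
    obtain ⟨n', rfl⟩ : ∃ n', n = n' + 1 := ⟨n - 1, by omega⟩
    have := phi_sq_integral lam n' (pr_pos lam hlam n')
    rw [← this]
    refine integral_congr_ae (Filter.Eventually.of_forall (fun ω => ?_))
    ring
  · rw [if_neg (by omega)]
    rw [show (fun ω => phi lam n ω * phi lam k ω) = fun ω => phi lam k ω * phi lam n ω from
      funext (fun ω => mul_comm _ _)]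
    exact key k n h

def Filt (n : ℕ) : MeasurableSpace G := MeasurableSpace.comap (proj (n+1)) ⊤

lemma Filt_mono : Monotone Filt := by
  apply monotone_nat_of_le_succ
  intro n
  have hcomp : proj (n+1) = (fun b : Fin (n+2) → ZMod 2 => fun i : Fin (n+1) => b i.castSucc)
      ∘ proj (n+2) := rfl
  rw [Filt, Filt, hcomp, ← MeasurableSpace.comap_comp]
  exact MeasurableSpace.comap_mono le_top

lemma Filt_le (n : ℕ) : Filt n ≤ (inferInstance : MeasurableSpace G) := by
  rintro s ⟨B, -, rfl⟩
  have : proj (n+1) ⁻¹' B = ⋃ b ∈ B, proj (n+1) ⁻¹' {b} := by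
    ext ω; simp
  rw [this]
  exact MeasurableSet.biUnion (Set.to_countable B) (fun b _ => cylinder_measurable _ b)

lemma DependsOnN.measurable_filt {f : G → ℝ} {n : ℕ} (h : DependsOnN f (n+1)) :
    Measurable[Filt n] f := by
  have hproj : @Measurable G (Fin (n+1) → ZMod 2) (Filt n) ⊤ (proj (n+1)) :=
    fun t _ => ⟨t, trivial, rfl⟩
  rw [h.factor]
  exact Measurable.comp (measurable_from_top) hproj

lemma indicator_s_dependsOn (n : ℕ) (B : Set (Fin (n+1) → ZMod 2)) :
    DependsOnN (fun ω => Set.indicator (proj (n+1) ⁻¹' B) (fun _ => (1:ℝ)) ω) (n+1) := by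
  intro ω ω' hh
  have hproj : proj (n+1) ω = proj (n+1) ω' := by
    funext i; exact hh i i.isLt
  have hmem : ω ∈ proj (n+1) ⁻¹' B ↔ ω' ∈ proj (n+1) ⁻¹' B := by
    simp [Set.mem_preimage, hproj]
  dsimp only
  by_cases hω : ω ∈ proj (n+1) ⁻¹' B
  · rw [Set.indicator_of_mem hω, Set.indicator_of_mem (hmem.mp hω)]
  · rw [Set.indicator_of_notMem hω, Set.indicator_of_notMem (fun hc => hω (hmem.mpr hc))]

lemma condexp_phi (lam : ℝ) (n : ℕ) (hn : 1 ≤ n) :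
    mu[phi lam n|Filt (n-1)] =ᵐ[mu] 0 := by
  obtain ⟨k, rfl⟩ : ∃ k, n = k + 1 := ⟨n - 1, by omega⟩
  have hn1 : k + 1 - 1 = k := by omega
  rw [hn1]
  haveI : SigmaFinite (mu.trim (Filt_le k)) := by
    haveI := isFiniteMeasure_trim (Filt_le k) (μ := mu)
    infer_instance
  refine (ae_eq_condExp_of_forall_setIntegral_eq (Filt_le k)
    ((phi_dependsOn lam (k+1)).integrable)
    (fun s _ _ => integrableOn_zero) ?_ ?_).symm
  · rintro s ⟨B, -, rfl⟩ -
    rw [integral_zero]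
    have hsm : MeasurableSet (proj (k+1) ⁻¹' B) :=
      Filt_le k _ ⟨B, trivial, rfl⟩
    rw [← integral_indicator hsm]
    have hpt : ∀ ω, Set.indicator (proj (k+1) ⁻¹' B) (phi lam (k+1)) ω
        = (fun ω => Set.indicator (proj (k+1) ⁻¹' B) (fun _ => (1:ℝ)) ω) ω
          * phi lam (k+1) ω := by
      intro ω
      by_cases h : ω ∈ proj (k+1) ⁻¹' B <;> simp [h]
    rw [integral_congr_ae (Filter.Eventually.of_forall hpt)]
    exact (mul_phi_integral lam k (indicator_s_dependsOn k B)).symm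
  · exact StronglyMeasurable.aestronglyMeasurable stronglyMeasurable_zero

lemma exp_mul_chi (t : ℝ) (z : ZMod 2) :
    Real.exp (t * chi z) = Real.cosh t + Real.sinh t * chi z := by
  rcases chi_cases z with h | h <;> rw [h]
  · rw [mul_one, mul_one, Real.cosh_add_sinh]
  · rw [mul_neg_one, mul_neg_one, ← sub_eq_add_neg, Real.cosh_sub_sinh]

lemma eLpNorm_phi_le (lam : ℝ) (hlam : 1 < lam) (n : ℕ) (hn : 1 ≤ n) :
    eLpNorm (phi lam n) ⊤ mu ≤ ENNReal.ofReal ((Real.sqrt (1 - (lam^2)⁻¹))⁻¹) := by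
  obtain ⟨k, rfl⟩ : ∃ k, n = k + 1 := ⟨n - 1, by omega⟩
  rw [eLpNorm_exponent_top]
  apply eLpNormEssSup_le_of_ae_bound (C := (Real.sqrt (1 - (lam^2)⁻¹))⁻¹)
  refine Filter.Eventually.of_forall (fun ω => ?_)
  rw [Real.norm_eq_abs]
  exact abs_phi_le lam hlam k ω

lemma eLpNorm_Sf_le (lam : ℝ) (hlam : 1 < lam) (n : ℕ) :
    eLpNorm (Sf lam n) ⊤ mu
      ≤ ENNReal.ofReal (lam * Real.sqrt n + (Real.sqrt (1 - (lam^2)⁻¹))⁻¹) := by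
  rw [eLpNorm_exponent_top]
  apply eLpNormEssSup_le_of_ae_bound
  refine Filter.Eventually.of_forall (fun ω => ?_)
  rw [Real.norm_eq_abs]
  exact Sf_abs_le lam hlam n ω

lemma dependsOn_exp_sum (lam : ℝ) (x : ℕ → ℝ) (s : Finset ℕ) (N : ℕ)
    (h : ∀ n ∈ s, n + 1 ≤ N) :
    DependsOnN (fun ω => Real.exp (∑ n ∈ s, x n * phi lam n ω)) N := by
  intro ω ω' hh
  dsimp only
  congr 1
  refine Finset.sum_congr rfl (fun n hn => ?_)
  rw [(phi_dependsOn lam n).mono (h n hn) hh]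

lemma subgaussian (lam : ℝ) (hlam : 1 < lam) (x : ℕ → ℝ) (s : Finset ℕ)
    (hs : ∀ k ∈ s, 1 ≤ k) :
    ∫ ω, Real.exp (∑ n ∈ s, x n * phi lam n ω) ∂mu
      ≤ Real.exp (((Real.sqrt (1 - (lam^2)⁻¹))⁻¹)^2 * (∑ n ∈ s, x n ^ 2) / 2) := by
  set cc : ℝ := (Real.sqrt (1 - (lam^2)⁻¹))⁻¹ with hcc
  have hcc0 : 0 < cc := inv_pos.mpr (Real.sqrt_pos.mpr (qpos lam hlam))
  induction s using Finset.induction_on_max with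
  | empty =>
    simp only [Finset.sum_empty, Real.exp_zero, mul_zero, zero_div]
    rw [integral_const]
    simp
  | insert a s hmax ih =>
    have ha : 1 ≤ a := hs a (Finset.mem_insert_self a s)
    have hs' : ∀ k ∈ s, 1 ≤ k := fun k hk => hs k (Finset.mem_insert_of_mem hk)
    have ih' := ih hs'
    obtain ⟨k, rfl⟩ : ∃ k, a = k + 1 := ⟨a - 1, by omega⟩
    have hanotin : (k+1) ∉ s := fun hc => lt_irrefl _ (hmax _ hc)
    set f : G → ℝ := fun ω => Real.exp (∑ n ∈ s, x n * phi lam n ω) with hf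
    have hfdep : DependsOnN f (k+1) :=
      dependsOn_exp_sum lam x s (k+1) (fun n hn => hmax n hn)
    set Y : G → ℝ := fun ω =>
      x (k+1) * (am lam k * Set.indicator (As lam k) (fun _ => (1:ℝ)) ω) with hY
    have hYdep : DependsOnN Y (k+1) := by
      intro ω ω' hh
      have e2 : (As lam k).indicator (fun _ => (1:ℝ)) ω
          = (As lam k).indicator (fun _ => (1:ℝ)) ω' :=
        indicator_dependsOn lam k (Sf_dependsOn lam k) hh
      simp only [hY, e2]
    have hYabs : ∀ ω, |Y ω| ≤ |x (k+1)| * cc := by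
      intro ω
      have h1 : |Set.indicator (As lam k) (fun _ => (1:ℝ)) ω| ≤ 1 := by
        by_cases h : ω ∈ As lam k <;> simp [h]
      have h2 : |am lam k| ≤ cc := by
        rw [abs_of_pos (am_pos lam hlam k)]; exact am_le lam hlam k
      calc |Y ω| = |x (k+1)| * (|am lam k| * |Set.indicator (As lam k) (fun _ => (1:ℝ)) ω|) := by
            rw [hY]; rw [abs_mul, abs_mul]
        _ ≤ |x (k+1)| * (cc * 1) := by
            apply mul_le_mul_of_nonneg_left _ (abs_nonneg _)
            exact mul_le_mul h2 h1 (abs_nonneg _) hcc0.le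
        _ = |x (k+1)| * cc := by ring
    have hpt : ∀ ω, Real.exp (∑ n ∈ insert (k+1) s, x n * phi lam n ω)
        = f ω * Real.cosh (Y ω) + (fun ω => f ω * Real.sinh (Y ω)) ω * chi (ω (k+1)) := by
      intro ω
      rw [Finset.sum_insert hanotin, Real.exp_add, mul_comm (Real.exp _)]
      have h3 : x (k+1) * phi lam (k+1) ω = Y ω * chi (ω (k+1)) := by
        rw [phi_succ, hY]; ring
      rw [h3, exp_mul_chi]
      dsimp only [hf]
      ring
    have hdep1 : DependsOnN (fun ω => f ω * Real.cosh (Y ω)) (k+1) := by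
      intro ω ω' hh; dsimp only; rw [hfdep hh, hYdep hh]
    have hdep2 : DependsOnN (fun ω => f ω * Real.sinh (Y ω)) (k+1) := by
      intro ω ω' hh; dsimp only; rw [hfdep hh, hYdep hh]
    have hdep2' : DependsOnN (fun ω => (fun ω => f ω * Real.sinh (Y ω)) ω * chi (ω (k+1)))
        (k+2) := dependsOn_mul_eval hdep2 chi
    calc ∫ ω, Real.exp (∑ n ∈ insert (k+1) s, x n * phi lam n ω) ∂mu
        = ∫ ω, (f ω * Real.cosh (Y ω)
            + (fun ω => f ω * Real.sinh (Y ω)) ω * chi (ω (k+1))) ∂mu :=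
          integral_congr_ae (Filter.Eventually.of_forall hpt)
      _ = (∫ ω, f ω * Real.cosh (Y ω) ∂mu)
            + ∫ ω, (fun ω => f ω * Real.sinh (Y ω)) ω * chi (ω (k+1)) ∂mu :=
          integral_add hdep1.integrable hdep2'.integrable
      _ = ∫ ω, f ω * Real.cosh (Y ω) ∂mu := by
          rw [integral_mul_eval hdep2 chi, chi_avg, mul_zero, add_zero]
      _ ≤ ∫ ω, f ω * Real.exp (cc^2 * x (k+1)^2 / 2) ∂mu := by
          refine integral_mono hdep1.integrable
            (hfdep.comp (fun t => t * Real.exp (cc^2 * x (k+1)^2 / 2))).integrable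
            (fun ω => ?_)
          have hfa : 0 < f ω := Real.exp_pos _
          have h4 : Real.cosh (Y ω) ≤ Real.exp (cc^2 * x (k+1)^2 / 2) := by
            calc Real.cosh (Y ω) ≤ Real.exp ((Y ω)^2 / 2) := Real.cosh_le_exp_half_sq _
              _ ≤ Real.exp (cc^2 * x (k+1)^2 / 2) := by
                  apply Real.exp_le_exp.mpr
                  apply div_le_div_of_nonneg_right _ (by norm_num)
                  calc (Y ω)^2 = |Y ω|^2 := (sq_abs _).symm
                    _ ≤ (|x (k+1)| * cc)^2 := by
                        apply pow_le_pow_left₀ (abs_nonneg _) (hYabs ω)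
                    _ = cc^2 * x (k+1)^2 := by
                        rw [mul_pow, sq_abs]; ring
          exact mul_le_mul_of_nonneg_left h4 hfa.le
      _ = Real.exp (cc^2 * x (k+1)^2 / 2) * ∫ ω, f ω ∂mu := by
          rw [← integral_const_mul]
          refine integral_congr_ae (Filter.Eventually.of_forall (fun ω => ?_))
          ring
      _ ≤ Real.exp (cc^2 * x (k+1)^2 / 2) * Real.exp (cc^2 * (∑ n ∈ s, x n ^ 2) / 2) :=
          mul_le_mul_of_nonneg_left ih' (Real.exp_pos _).le
      _ = Real.exp (cc^2 * (∑ n ∈ insert (k+1) s, x n ^ 2) / 2) := by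
          rw [← Real.exp_add, Finset.sum_insert hanotin]
          congr 1
          ring

end

open MeasureTheory Finset

/-- For every `ε > 0` there exist `δ_ε > 0`, a probability space `(T, m)`
and a real-valued orthonormal martingale difference sequence `(φ_n)_{n ≥ 1}` such that
`‖φ_n‖_∞ ≤ 1 + ε`, the subgaussian bound
`∫ exp (∑ x_n φ_n) ≤ exp ((1+ε)² ∑ x_n² / 2)` holds for every finitely supported real
sequence `(x_n)` (supported in `n ≥ 1`), and any Sidon constant `C_n` of
`(φ_1, …, φ_n)` satisfies `C_n ≥ δ_ε √n`. -/
theorem subgaussian_not_sidon (ε : ℝ) (hε : 0 < ε) :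
    ∃ δ : ℝ, 0 < δ ∧
    ∃ (T : Type) (_ : MeasurableSpace T) (m : Measure T) (φ : ℕ → T → ℝ)
      (𝒜 : ℕ → MeasurableSpace T),
      IsProbabilityMeasure m ∧
      -- `𝒜` is a filtration on `T`
      Monotone 𝒜 ∧ (∀ n, 𝒜 n ≤ ‹MeasurableSpace T›) ∧
      -- `(φ_n)_{n ≥ 1}` is a martingale difference sequence relative to `𝒜`
      (∀ n, 1 ≤ n → Measurable[𝒜 n] (φ n)) ∧
      (∀ n, 1 ≤ n → m[φ n|𝒜 (n - 1)] =ᵐ[m] 0) ∧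
      -- `(φ_n)_{n ≥ 1}` is orthonormal in `L²(T, m)`
      (∀ n k, 1 ≤ n → 1 ≤ k →
        ∫ t, φ n t * φ k t ∂m = if n = k then 1 else 0) ∧
      -- (i) uniform boundedness: `‖φ_n‖_∞ ≤ 1 + ε`
      (∀ n, 1 ≤ n → eLpNorm (φ n) ⊤ m ≤ ENNReal.ofReal (1 + ε)) ∧
      -- (ii) the subgaussian estimate
      (∀ (s : Finset ℕ), (∀ k ∈ s, 1 ≤ k) → ∀ x : ℕ → ℝ,
        ∫ t, Real.exp (∑ n ∈ s, x n * φ n t) ∂m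
          ≤ Real.exp ((1 + ε) ^ 2 * (∑ n ∈ s, x n ^ 2) / 2)) ∧
      -- (iii) any Sidon constant for `(φ_1, …, φ_n)` is at least `δ √n`
      (∀ n, 1 ≤ n → ∀ C : ℝ,
        (∀ x : ℕ → ℝ,
          ENNReal.ofReal (∑ k ∈ Finset.Icc 1 n, |x k|)
            ≤ ENNReal.ofReal C *
              eLpNorm (fun t => ∑ k ∈ Finset.Icc 1 n, x k * φ k t) ⊤ m) →
        δ * Real.sqrt n ≤ C) := by
  have h1ε : (0:ℝ) < 1 + ε := by linarith
  set u : ℝ := ((1+ε)^2)⁻¹ with hu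
  have h1 : 1 < (1+ε)^2 := by nlinarith
  have hu0 : 0 < u := by positivity
  have hu1 : u < 1 := by
    rw [hu, inv_lt_one_iff₀]; right; exact h1
  have h1mu : 0 < 1 - u := by linarith
  set lam : ℝ := (Real.sqrt (1 - u))⁻¹ with hlamdef
  have hsqpos : 0 < Real.sqrt (1 - u) := Real.sqrt_pos.mpr h1mu
  have hsqlt : Real.sqrt (1 - u) < 1 := by
    calc Real.sqrt (1 - u) < Real.sqrt 1 := by
          apply Real.sqrt_lt_sqrt h1mu.le; linarith
      _ = 1 := Real.sqrt_one
  have hlam : 1 < lam := by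
    rw [hlamdef]
    rw [lt_inv_comm₀ one_pos hsqpos]
    simpa using hsqlt
  have hkey : 1 - (lam^2)⁻¹ = u := by
    rw [hlamdef, inv_pow, inv_inv, Real.sq_sqrt h1mu.le]; ring
  have hcckey : (Real.sqrt (1 - (lam^2)⁻¹))⁻¹ = 1 + ε := by
    rw [hkey, hu, Real.sqrt_inv, Real.sqrt_sq h1ε.le, inv_inv]
  set K : ℝ := lam + (1 + ε) with hK
  have hKpos : 0 < K := by positivity
  refine ⟨K⁻¹, inv_pos.mpr hKpos, G, inferInstance, mu, phi lam, Filt,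
    inferInstance, Filt_mono, Filt_le, ?_, ?_, ?_, ?_, ?_, ?_⟩
  · exact fun n _ => (phi_dependsOn lam n).measurable_filt
  · exact fun n hn => condexp_phi lam n hn
  · exact fun n k hn hk => phi_orthonormal lam hlam n k hn hk
  · intro n hn
    have := eLpNorm_phi_le lam hlam n hn
    rwa [hcckey] at this
  · intro s hs x
    have := subgaussian lam hlam x s hs
    rwa [hcckey] at this
  · intro n hn C hC
    have hsn1 : 1 ≤ Real.sqrt n := by
      rw [show (1:ℝ) = Real.sqrt 1 from Real.sqrt_one.symm]
      apply Real.sqrt_le_sqrt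
      exact_mod_cast hn
    have hsnpos : 0 < Real.sqrt n := by linarith
    have hC1 := hC (fun _ => 1)
    have hLHS : (∑ k ∈ Finset.Icc 1 n, |(1:ℝ)|) = n := by
      rw [Finset.sum_const, Nat.card_Icc]
      simp
    have hfun : (fun t => ∑ k ∈ Finset.Icc 1 n, (1:ℝ) * phi lam k t) = Sf lam n := by
      funext t
      calc ∑ k ∈ Finset.Icc 1 n, (1:ℝ) * phi lam k t
          = ∑ k ∈ Finset.Icc 1 n, phi lam k t :=
            Finset.sum_congr rfl (fun k _ => one_mul _)
        _ = Sf lam n t := (Sf_eq_sum lam n t).symm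
    rw [hLHS, hfun] at hC1
    set B : ℝ := lam * Real.sqrt n + (1 + ε) with hB
    have hBpos : 0 < B := by positivity
    have help : eLpNorm (Sf lam n) ⊤ mu ≤ ENNReal.ofReal B := by
      have := eLpNorm_Sf_le lam hlam n
      rwa [hcckey] at this
    have hCpos : 0 < C := by
      by_contra hc
      push_neg at hc
      rw [ENNReal.ofReal_eq_zero.mpr hc, zero_mul, nonpos_iff_eq_zero,
        ENNReal.ofReal_eq_zero] at hC1
      have : (1:ℝ) ≤ (n:ℝ) := by exact_mod_cast hn
      linarith
    have hC2 : ENNReal.ofReal (n:ℝ) ≤ ENNReal.ofReal (C * B) := by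
      calc ENNReal.ofReal (n:ℝ) ≤ ENNReal.ofReal C * eLpNorm (Sf lam n) ⊤ mu := hC1
        _ ≤ ENNReal.ofReal C * ENNReal.ofReal B := mul_le_mul_right help _
        _ = ENNReal.ofReal (C * B) := (ENNReal.ofReal_mul hCpos.le).symm
    have hreal : (n:ℝ) ≤ C * B := by
      have := (ENNReal.ofReal_le_ofReal_iff (by positivity)).mp hC2
      exact this
    have hBK : B ≤ K * Real.sqrt n := by
      rw [hB, hK]
      have : (1+ε) * 1 ≤ (1+ε) * Real.sqrt n := by
        apply mul_le_mul_of_nonneg_left hsn1 h1ε.le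
      nlinarith
    have h5 : Real.sqrt n * Real.sqrt n ≤ (C * K) * Real.sqrt n := by
      calc Real.sqrt n * Real.sqrt n = (n:ℝ) := Real.mul_self_sqrt (by positivity)
        _ ≤ C * B := hreal
        _ ≤ C * (K * Real.sqrt n) := mul_le_mul_of_nonneg_left hBK hCpos.le
        _ = (C * K) * Real.sqrt n := by ring
    have h6 : Real.sqrt n ≤ C * K := le_of_mul_le_mul_right h5 hsnpos
    calc K⁻¹ * Real.sqrt n ≤ K⁻¹ * (C * K) := mul_le_mul_of_nonneg_left h6 (by positivity)
      _ = C := by field_simp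
end

section
/- Let (Ω', 𝒜', P') be a probability space, let ℬ ⊂ 𝒜' be a σ-subalgebra, and let φ ∈ L¹(Ω', 𝒜', P') take values in [−1, 1] with E[φ | ℬ] = 0. Then for any Banach space B, any x₁ ∈ B, and any ℬ-measurable Bochner-integrable x₀ : Ω' → B, ∫ ‖x₀(ω) + φ(ω) x₁‖ dP'(ω) ≤ ∫ (‖x₀(ω) + x₁‖ + ‖x₀(ω) − x₁‖)/2 dP'(ω). -/
open MeasureTheory

/-- (Conditional version of Statement 9.) If `φ` is an integrable random
variable on a probability space `(Ω', 𝒜', P')` with values in `[-1, 1]` and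
`E[φ | ℬ] = 0` for a σ-subalgebra `ℬ ⊆ 𝒜'`, then for any Banach space `B`, any `x₁ ∈ B`
and any `ℬ`-measurable Bochner-integrable `x₀ : Ω' → B`,
`∫ ‖x₀(ω) + φ(ω) x₁‖ dP' ≤ ∫ (‖x₀(ω) + x₁‖ + ‖x₀(ω) - x₁‖)/2 dP'`. -/
theorem mean_norm_le_rademacher_cond {Ω' : Type} [mΩ' : MeasurableSpace Ω']
    (P' : Measure Ω') [IsProbabilityMeasure P']
    (ℬ : MeasurableSpace Ω') (hℬ : ℬ ≤ mΩ')
    (φ : Ω' → ℝ) (hint : Integrable φ P')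
    (hrange : ∀ᵐ ω ∂P', φ ω ∈ Set.Icc (-1 : ℝ) 1)
    (hcond : P'[φ|ℬ] =ᵐ[P'] 0)
    (B : Type) [NormedAddCommGroup B] [NormedSpace ℝ B]
    (x₀ : Ω' → B) (hx₀int : Integrable x₀ P') (hx₀meas : StronglyMeasurable[ℬ] x₀)
    (x₁ : B) :
    ∫ ω, ‖x₀ ω + φ ω • x₁‖ ∂P'
      ≤ ∫ ω, (‖x₀ ω + x₁‖ + ‖x₀ ω - x₁‖) / 2 ∂P' := by
  set g : Ω' → ℝ := fun ω => (‖x₀ ω + x₁‖ - ‖x₀ ω - x₁‖) * (1 / 2) with hg_def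
  have hg_meas : StronglyMeasurable[ℬ] g := by
    exact ((hx₀meas.add stronglyMeasurable_const).norm.sub
      (hx₀meas.sub stronglyMeasurable_const).norm).mul stronglyMeasurable_const
  have hg_bdd : ∀ ω, ‖g ω‖ ≤ ‖x₁‖ := by
    intro ω
    have h := abs_norm_sub_norm_le (x₀ ω + x₁) (x₀ ω - x₁)
    have heq : (x₀ ω + x₁) - (x₀ ω - x₁) = (2 : ℝ) • x₁ := by
      rw [two_smul]; abel
    rw [heq, norm_smul] at h
    simp only [Real.norm_ofNat] at h
    rw [Real.norm_eq_abs, hg_def, abs_mul]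
    have : |(1:ℝ)/2| = 1/2 := by norm_num
    rw [this]
    nlinarith [abs_nonneg (‖x₀ ω + x₁‖ - ‖x₀ ω - x₁‖)]
  have hφg_int : Integrable (fun ω => g ω * φ ω) P' :=
    hint.bdd_mul ((hg_meas.mono hℬ).aestronglyMeasurable) (c := ‖x₁‖) (Filter.Eventually.of_forall hg_bdd)
  have hφg_zero : ∫ ω, g ω * φ ω ∂P' = 0 := by
    have h1 := condExp_mul_of_stronglyMeasurable_left (μ := P') (m := ℬ) hg_meas hφg_int hint
    have h2 : P'[g * φ|ℬ] =ᵐ[P'] 0 := by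
      refine h1.trans ?_
      filter_upwards [hcond] with ω hω
      simp [hω]
    have h3 : ∫ ω, (P'[g * φ|ℬ]) ω ∂P' = ∫ ω, (g * φ) ω ∂P' := integral_condExp hℬ
    rw [integral_congr_ae h2] at h3
    simp only [Pi.zero_apply, integral_zero, Pi.mul_apply] at h3
    exact h3.symm
  have hptwise : ∀ᵐ ω ∂P', ‖x₀ ω + φ ω • x₁‖ ≤
      (‖x₀ ω + x₁‖ + ‖x₀ ω - x₁‖) / 2 + g ω * φ ω := by
    filter_upwards [hrange] with ω hω
    obtain ⟨h1, h2⟩ := hω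
    have hdecomp : x₀ ω + φ ω • x₁ =
        ((1 + φ ω) / 2) • (x₀ ω + x₁) + ((1 - φ ω) / 2) • (x₀ ω - x₁) := by
      match_scalars <;> ring
    calc ‖x₀ ω + φ ω • x₁‖ ≤ ((1 + φ ω) / 2) * ‖x₀ ω + x₁‖ + ((1 - φ ω) / 2) * ‖x₀ ω - x₁‖ := by
          rw [hdecomp]
          refine (norm_add_le _ _).trans ?_
          rw [norm_smul, norm_smul, Real.norm_eq_abs, Real.norm_eq_abs,
            abs_of_nonneg (by linarith), abs_of_nonneg (by linarith)]
      _ = (‖x₀ ω + x₁‖ + ‖x₀ ω - x₁‖) / 2 + g ω * φ ω := by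
          simp only [hg_def]; ring
  have hlhs_int : Integrable (fun ω => ‖x₀ ω + φ ω • x₁‖) P' :=
    (hx₀int.add (hint.smul_const x₁)).norm
  have hhalf_int : Integrable (fun ω => (‖x₀ ω + x₁‖ + ‖x₀ ω - x₁‖) / 2) P' :=
    ((hx₀int.add (integrable_const x₁)).norm.add
      ((hx₀int.sub (integrable_const x₁)).norm)).div_const 2
  calc ∫ ω, ‖x₀ ω + φ ω • x₁‖ ∂P'
      ≤ ∫ ω, ((‖x₀ ω + x₁‖ + ‖x₀ ω - x₁‖) / 2 + g ω * φ ω) ∂P' :=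
        integral_mono_ae hlhs_int (hhalf_int.add hφg_int) hptwise
    _ = ∫ ω, (‖x₀ ω + x₁‖ + ‖x₀ ω - x₁‖) / 2 ∂P' + ∫ ω, g ω * φ ω ∂P' :=
        integral_add hhalf_int hφg_int
    _ = ∫ ω, (‖x₀ ω + x₁‖ + ‖x₀ ω - x₁‖) / 2 ∂P' := by rw [hφg_zero, add_zero]
end

section
/- Let (d_n)_{n≥0} be a real-valued martingale difference sequence on a probability space (Ω', 𝒜', P') with respect to an increasing filtration (𝒜_n), with 𝒜_0 trivial (so d_0 is constant), such that |d_n| ≤ 1 almost surely for every n. Let (ε_n)_{n≥1} be an i.i.d. sequence of random variables on a probability space (Ω, P) with P(ε_n = 1) = P(ε_n = −1) = 1/2. Then for any Banach space B, any k ≥ 1, and any x₀, x₁, …, x_k ∈ B, ∫ ‖d_0 x_0 + Σ_{n=1}^k d_n x_n‖ dP' ≤ ∫ ‖d_0 x_0 + Σ_{n=1}^k ε_n x_n‖ dP. -/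
open MeasureTheory ProbabilityTheory


lemma convex_norm_bound {B : Type} [NormedAddCommGroup B] [NormedSpace ℝ B]
    (t : ℝ) (ht : |t| ≤ 1) (v z : B) :
    ‖v + t • z‖ ≤ (1 - t) / 2 * ‖v - z‖ + (1 + t) / 2 * ‖v + z‖ := by
  obtain ⟨h1, h2⟩ := abs_le.mp ht
  have hrep : v + t • z = ((1 - t) / 2) • (v - z) + ((1 + t) / 2) • (v + z) := by
    module
  rw [hrep]
  calc ‖((1 - t) / 2) • (v - z) + ((1 + t) / 2) • (v + z)‖
      ≤ ‖((1 - t) / 2) • (v - z)‖ + ‖((1 + t) / 2) • (v + z)‖ := norm_add_le _ _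
    _ = (1 - t) / 2 * ‖v - z‖ + (1 + t) / 2 * ‖v + z‖ := by
        rw [norm_smul, norm_smul, Real.norm_eq_abs, Real.norm_eq_abs,
          abs_of_nonneg (by linarith), abs_of_nonneg (by linarith)]

noncomputable def radLaw : Measure ℝ := (2 : ENNReal)⁻¹ • (Measure.dirac (1:ℝ) + Measure.dirac (-1:ℝ))

lemma integrable_dirac' {f : ℝ → ℝ} (a : ℝ) : Integrable f (Measure.dirac a) := by
  have h : f =ᵐ[Measure.dirac a] (fun _ => f a) := by
    rw [Filter.EventuallyEq, ae_dirac_eq]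
    simp
  exact (integrable_const (f a)).congr h.symm

lemma integral_radLaw (f : ℝ → ℝ) : ∫ s, f s ∂radLaw = 2⁻¹ * f 1 + 2⁻¹ * f (-1) := by
  rw [radLaw, integral_smul_measure, integral_add_measure (integrable_dirac' 1) (integrable_dirac' (-1)),
    integral_dirac, integral_dirac]
  simp [ENNReal.toReal_inv, mul_add]

lemma law_eps {Ω : Type} [mΩ : MeasurableSpace Ω] (P : Measure Ω) [IsProbabilityMeasure P]
    (e : Ω → ℝ) (hmeas : Measurable e)
    (h1 : P {ω | e ω = 1} = 1/2) (h2 : P {ω | e ω = -1} = 1/2) :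
    P.map e = radLaw := by
  have hA : MeasurableSet {ω | e ω = 1} := hmeas (measurableSet_singleton 1)
  have hB : MeasurableSet {ω | e ω = -1} := hmeas (measurableSet_singleton (-1))
  have hdisj : Disjoint {ω | e ω = 1} {ω | e ω = -1} := by
    rw [Set.disjoint_left]; rintro ω (h : e ω = 1) (h' : e ω = -1); norm_num [h] at h'
  have hunion : P ({ω | e ω = 1} ∪ {ω | e ω = -1}) = 1 := by
    rw [measure_union hdisj hB, h1, h2, ENNReal.add_halves]
  have hcompl : P (({ω | e ω = 1} ∪ {ω | e ω = -1})ᶜ) = 0 := by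
    rw [measure_compl (hA.union hB) (measure_ne_top _ _), hunion, measure_univ, tsub_self]
  ext s hs
  rw [Measure.map_apply hmeas hs]
  have key : P (e ⁻¹' s) = P (e ⁻¹' s ∩ ({ω | e ω = 1} ∪ {ω | e ω = -1})) := by
    rw [← measure_inter_add_diff (e ⁻¹' s) (hA.union hB)]
    have : P (e ⁻¹' s \ ({ω | e ω = 1} ∪ {ω | e ω = -1})) = 0 :=
      measure_mono_null (Set.diff_subset_compl _ _) hcompl
    rw [this, add_zero]
  have hsplit : e ⁻¹' s ∩ ({ω | e ω = 1} ∪ {ω | e ω = -1})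
      = (e ⁻¹' s ∩ {ω | e ω = 1}) ∪ (e ⁻¹' s ∩ {ω | e ω = -1}) := Set.inter_union_distrib_left _ _ _
  have hdisj' : Disjoint (e ⁻¹' s ∩ {ω | e ω = 1}) (e ⁻¹' s ∩ {ω | e ω = -1}) :=
    hdisj.mono Set.inter_subset_right Set.inter_subset_right
  rw [key, hsplit, measure_union hdisj' ((hmeas hs).inter hB)]
  have hin1 : (1:ℝ) ∈ s → e ⁻¹' s ∩ {ω | e ω = 1} = {ω | e ω = 1} := by
    intro h; ext ω
    simp only [Set.mem_inter_iff, Set.mem_preimage, Set.mem_setOf_eq]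
    exact ⟨fun ⟨_, h2⟩ => h2, fun h2 => ⟨h2 ▸ h, h2⟩⟩
  have hout1 : (1:ℝ) ∉ s → e ⁻¹' s ∩ {ω | e ω = 1} = ∅ := by
    intro h; ext ω
    simp only [Set.mem_inter_iff, Set.mem_preimage, Set.mem_setOf_eq, Set.mem_empty_iff_false,
      iff_false, not_and]
    intro hin heq; exact h (heq ▸ hin)
  have hin2 : (-1:ℝ) ∈ s → e ⁻¹' s ∩ {ω | e ω = -1} = {ω | e ω = -1} := by
    intro h; ext ω
    simp only [Set.mem_inter_iff, Set.mem_preimage, Set.mem_setOf_eq]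
    exact ⟨fun ⟨_, h2⟩ => h2, fun h2 => ⟨h2 ▸ h, h2⟩⟩
  have hout2 : (-1:ℝ) ∉ s → e ⁻¹' s ∩ {ω | e ω = -1} = ∅ := by
    intro h; ext ω
    simp only [Set.mem_inter_iff, Set.mem_preimage, Set.mem_setOf_eq, Set.mem_empty_iff_false,
      iff_false, not_and]
    intro hin heq; exact h (heq ▸ hin)
  have hr : radLaw s = 2⁻¹ * (s.indicator 1 1 + s.indicator 1 (-1)) := by
    rw [radLaw]
    simp [Measure.dirac_apply' _ hs, mul_add]
  rw [hr]
  by_cases m1 : (1:ℝ) ∈ s <;> by_cases m2 : (-1:ℝ) ∈ s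
  · rw [hin1 m1, hin2 m2, h1, h2, Set.indicator_of_mem m1, Set.indicator_of_mem m2]
    rw [ENNReal.add_halves]
    norm_num
    rw [ENNReal.inv_mul_cancel] <;> norm_num
  · rw [hin1 m1, hout2 m2, h1, Set.indicator_of_mem m1, Set.indicator_of_notMem m2]
    simp [one_div]
  · rw [hout1 m1, hin2 m2, h2, Set.indicator_of_notMem m1, Set.indicator_of_mem m2]
    simp [one_div]
  · rw [hout1 m1, hout2 m2, Set.indicator_of_notMem m1, Set.indicator_of_notMem m2]
    simp

lemma key_split {Ω : Type} [mΩ : MeasurableSpace Ω] (P : Measure Ω) [IsProbabilityMeasure P]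
    (ε : ℕ → Ω → ℝ) (hεmeas : ∀ n, 1 ≤ n → Measurable (ε n))
    (hεindep : iIndepFun (fun n => ε (n + 1)) P)
    (hεdist : ∀ n, 1 ≤ n → P {ω | ε n ω = 1} = 1 / 2 ∧ P {ω | ε n ω = -1} = 1 / 2)
    (m : ℕ) (hm : 1 ≤ m) (J : Finset ℕ) (hJ : ∀ n ∈ J, 1 ≤ n) (hmJ : m ∉ J)
    (G : ℝ → (ℕ → ℝ) → ℝ) (hG : Measurable (fun p : ℝ × (ℕ → ℝ) => G p.1 p.2))
    (hint : Integrable (fun ω => G (ε m ω) (fun n => if n ∈ J then ε n ω else 0)) P) :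
    ∫ ω, G (ε m ω) (fun n => if n ∈ J then ε n ω else 0) ∂P
      = 2⁻¹ * ∫ ω, G 1 (fun n => if n ∈ J then ε n ω else 0) ∂P
        + 2⁻¹ * ∫ ω, G (-1) (fun n => if n ∈ J then ε n ω else 0) ∂P := by
  classical
  set Y : Ω → (ℕ → ℝ) := fun ω n => if n ∈ J then ε n ω else 0 with hY
  have hYmeas : Measurable Y := by
    apply measurable_pi_lambda
    intro n
    show Measurable fun c => if n ∈ J then ε n c else 0
    by_cases h : n ∈ J
    · simp only [if_pos h]; exact hεmeas n (hJ n h)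
    · simp only [if_neg h]; exact measurable_const
  -- independence of ε m and Y
  set T : Finset ℕ := J.image (· - 1) with hT
  have hdisjST : Disjoint ({m - 1} : Finset ℕ) T := by
    rw [Finset.disjoint_left]
    intro a ha haT
    rw [Finset.mem_singleton] at ha
    rw [hT, Finset.mem_image] at haT
    obtain ⟨n, hn, hn'⟩ := haT
    have := hJ n hn
    have : n = m := by omega
    exact hmJ (this ▸ hn)
  have hfmeas : ∀ i : ℕ, Measurable (fun ω => ε (i + 1) ω) := fun i => hεmeas (i+1) (by omega)
  have hbase := ProbabilityTheory.iIndepFun.indepFun_finset ({m - 1} : Finset ℕ) T hdisjST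
    hεindep hfmeas
  set φ : (({m - 1} : Finset ℕ) → ℝ) → ℝ := fun v => v ⟨m - 1, Finset.mem_singleton_self _⟩
  set ψ : (T → ℝ) → (ℕ → ℝ) := fun v n =>
    if h : n ∈ J then v ⟨n - 1, by rw [hT]; exact Finset.mem_image_of_mem _ h⟩ else 0
  have hφ : Measurable φ := measurable_pi_apply _
  have hψ : Measurable ψ := by
    apply measurable_pi_lambda
    intro n
    by_cases h : n ∈ J
    · simp only [ψ, dif_pos h]
      exact measurable_pi_apply _
    · simp only [ψ, dif_neg h]
      exact measurable_const
  have hcomp := hbase.comp hφ hψ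
  have heq1 : (φ ∘ fun a (i : ({m - 1} : Finset ℕ)) => ε (↑i + 1) a) = ε m := by
    funext ω
    simp only [Function.comp_apply, φ]
    congr 1
    omega
  have heq2 : (ψ ∘ fun a (i : T) => ε (↑i + 1) a) = Y := by
    funext ω n
    simp only [Function.comp_apply, ψ, hY]
    by_cases h : n ∈ J
    · rw [dif_pos h, if_pos h]
      congr 1
      have := hJ n h
      omega
    · rw [dif_neg h, if_neg h]
  rw [heq1, heq2] at hcomp
  have hmapeq := (indepFun_iff_map_prod_eq_prod_map_map (hεmeas m hm).aemeasurable
    hYmeas.aemeasurable).mp hcomp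
  have hlaw : P.map (ε m) = radLaw := law_eps P (ε m) (hεmeas m hm) (hεdist m hm).1 (hεdist m hm).2
  have hpair : AEMeasurable (fun ω => (ε m ω, Y ω)) P :=
    ((hεmeas m hm).prodMk hYmeas).aemeasurable
  have hGsm : AEStronglyMeasurable (fun p : ℝ × (ℕ → ℝ) => G p.1 p.2)
      (P.map (fun ω => (ε m ω, Y ω))) := hG.stronglyMeasurable.aestronglyMeasurable
  have hint' : Integrable (fun p : ℝ × (ℕ → ℝ) => G p.1 p.2) ((P.map (ε m)).prod (P.map Y)) := by
    rw [← hmapeq]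
    exact (integrable_map_measure hGsm hpair).mpr hint
  have step : ∫ ω, G (ε m ω) (Y ω) ∂P = ∫ s, ∫ t, G s t ∂(P.map Y) ∂(P.map (ε m)) := by
    rw [← integral_map hpair hGsm, hmapeq, integral_prod _ hint']
  have backmap : ∀ s0 : ℝ, ∫ t, G s0 t ∂(P.map Y) = ∫ ω, G s0 (Y ω) ∂P := by
    intro s0
    exact integral_map hYmeas.aemeasurable
      ((hG.comp (measurable_const.prodMk measurable_id)).stronglyMeasurable.aestronglyMeasurable)
  rw [step, hlaw, integral_radLaw, backmap, backmap]

lemma eps_abs_le_one {Ω : Type} [mΩ : MeasurableSpace Ω] (P : Measure Ω) [IsProbabilityMeasure P]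
    (e : Ω → ℝ) (h1 : P {ω | e ω = 1} = 1/2) (h2 : P {ω | e ω = -1} = 1/2)
    (hmeas : Measurable e) : ∀ᵐ ω ∂P, |e ω| ≤ 1 := by
  have hA : MeasurableSet {ω | e ω = 1} := hmeas (measurableSet_singleton 1)
  have hB : MeasurableSet {ω | e ω = -1} := hmeas (measurableSet_singleton (-1))
  have hdisj : Disjoint {ω | e ω = 1} {ω | e ω = -1} := by
    rw [Set.disjoint_left]; rintro ω (h : e ω = 1) (h' : e ω = -1); norm_num [h] at h'
  have hunion : P ({ω | e ω = 1} ∪ {ω | e ω = -1}) = 1 := by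
    rw [measure_union hdisj hB, h1, h2, ENNReal.add_halves]
  have hcompl : P (({ω | e ω = 1} ∪ {ω | e ω = -1})ᶜ) = 0 := by
    rw [measure_compl (hA.union hB) (measure_ne_top _ _), hunion, measure_univ, tsub_self]
  rw [ae_iff]
  refine measure_mono_null ?_ hcompl
  intro ω hω
  simp only [Set.mem_compl_iff, Set.mem_union, Set.mem_setOf_eq] at hω ⊢
  rintro (h | h) <;> rw [h] at hω <;> simp at hω <;> linarith [hω]

lemma rad_int {Ω : Type} [mΩ : MeasurableSpace Ω] (P : Measure Ω) [IsProbabilityMeasure P]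
    (ε : ℕ → Ω → ℝ) (hεmeas : ∀ n, 1 ≤ n → Measurable (ε n))
    (hεindep : iIndepFun (fun n => ε (n + 1)) P)
    (hεdist : ∀ n, 1 ≤ n → P {ω | ε n ω = 1} = 1 / 2 ∧ P {ω | ε n ω = -1} = 1 / 2)
    {B : Type} [NormedAddCommGroup B] [NormedSpace ℝ B] (x : ℕ → B) :
    ∀ (J : Finset ℕ), (∀ n ∈ J, 1 ≤ n) → ∀ y : B,
    ∫ ω, ‖y + ∑ n ∈ J, ε n ω • x n‖ ∂P
      = 2⁻¹ ^ J.card * ∑ A ∈ J.powerset, ‖y + ∑ n ∈ J, (if n ∈ A then (1:ℝ) else -1) • x n‖ := by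
  classical
  intro J
  induction J using Finset.induction_on with
  | empty => intro _ y; simp
  | @insert m J hmJ ih =>
    intro hJ y
    have hm : 1 ≤ m := hJ m (Finset.mem_insert_self _ _)
    have hJ' : ∀ n ∈ J, 1 ≤ n := fun n hn => hJ n (Finset.mem_insert_of_mem hn)
    set G : ℝ → (ℕ → ℝ) → ℝ := fun s t => ‖y + s • x m + ∑ n ∈ J, t n • x n‖ with hGdef
    have hGcont : Continuous fun p : ℝ × (ℕ → ℝ) => G p.1 p.2 := by
      apply Continuous.norm
      exact (continuous_const.add (continuous_fst.smul continuous_const)).add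
        (continuous_finset_sum J fun n _ =>
          ((continuous_apply n).comp continuous_snd).smul continuous_const)
    have hG : Measurable fun p : ℝ × (ℕ → ℝ) => G p.1 p.2 := hGcont.measurable
    have hsum : ∀ ω : Ω, ∑ n ∈ J, (if n ∈ J then ε n ω else 0) • x n = ∑ n ∈ J, ε n ω • x n :=
      fun ω => Finset.sum_congr rfl fun n hn => by rw [if_pos hn]
    have hlhs : ∀ ω, ‖y + ∑ n ∈ insert m J, ε n ω • x n‖
        = G (ε m ω) (fun n => if n ∈ J then ε n ω else 0) := by
      intro ω
      show ‖y + ∑ n ∈ insert m J, ε n ω • x n‖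
          = ‖y + ε m ω • x m + ∑ n ∈ J, (if n ∈ J then ε n ω else 0) • x n‖
      rw [hsum ω, Finset.sum_insert hmJ, ← add_assoc]
    -- integrability
    have habs : ∀ᵐ ω ∂P, ∀ n ∈ insert m J, |ε n ω| ≤ 1 := by
      rw [Finset.eventually_all]
      intro n hn
      exact eps_abs_le_one P (ε n) (hεdist n (hJ n hn)).1 (hεdist n (hJ n hn)).2
        (hεmeas n (hJ n hn))
    have hmeasint : ∀ s0 : ℝ, AEStronglyMeasurable
        (fun ω => G s0 (fun n => if n ∈ J then ε n ω else 0)) P := by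
      intro s0
      have hYmeas : Measurable (fun ω n => if n ∈ J then ε n ω else 0 : Ω → ℕ → ℝ) := by
        apply measurable_pi_lambda
        intro n
        show Measurable fun c => if n ∈ J then ε n c else 0
        by_cases h : n ∈ J
        · simp only [if_pos h]; exact hεmeas n (hJ' n h)
        · simp only [if_neg h]; exact measurable_const
      exact (hG.comp (measurable_const.prodMk hYmeas)).aestronglyMeasurable
    have hbound : ∀ (s0 : ℝ) ω, |s0| ≤ 1 → (∀ n ∈ J, |(if n ∈ J then ε n ω else 0 : ℝ)| ≤ 1) →
        ‖G s0 (fun n => if n ∈ J then ε n ω else 0)‖ ≤ ‖y‖ + ‖x m‖ + ∑ n ∈ J, ‖x n‖ := by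
      intro s0 ω hs0 ht
      rw [hGdef]
      simp only [norm_norm]
      refine (norm_add_le _ _).trans ?_
      gcongr
      · refine (norm_add_le _ _).trans ?_
        gcongr
        rw [norm_smul, Real.norm_eq_abs]
        calc |s0| * ‖x m‖ ≤ 1 * ‖x m‖ := by gcongr
          _ = ‖x m‖ := one_mul _
      · refine (norm_sum_le _ _).trans ?_
        apply Finset.sum_le_sum
        intro n hn
        rw [norm_smul, Real.norm_eq_abs]
        calc _ ≤ 1 * ‖x n‖ := by gcongr; exact ht n hn
          _ = ‖x n‖ := one_mul _
    have hint : Integrable (fun ω => G (ε m ω) (fun n => if n ∈ J then ε n ω else 0)) P := by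
      refine Integrable.mono' (integrable_const (‖y‖ + ‖x m‖ + ∑ n ∈ J, ‖x n‖)) ?_ ?_
      · have hYmeas : Measurable (fun ω n => if n ∈ J then ε n ω else 0 : Ω → ℕ → ℝ) := by
          apply measurable_pi_lambda
          intro n
          show Measurable fun c => if n ∈ J then ε n c else 0
          by_cases h : n ∈ J
          · simp only [if_pos h]; exact hεmeas n (hJ' n h)
          · simp only [if_neg h]; exact measurable_const
        exact (hG.comp ((hεmeas m hm).prodMk hYmeas)).aestronglyMeasurable
      · filter_upwards [habs] with ω hω
        refine hbound (ε m ω) ω (hω m (Finset.mem_insert_self _ _)) ?_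
        intro n hn
        rw [if_pos hn]
        exact hω n (Finset.mem_insert_of_mem hn)
    -- main computation
    calc ∫ ω, ‖y + ∑ n ∈ insert m J, ε n ω • x n‖ ∂P
        = ∫ ω, G (ε m ω) (fun n => if n ∈ J then ε n ω else 0) ∂P := by
          exact integral_congr_ae (Filter.Eventually.of_forall fun ω => hlhs ω)
      _ = 2⁻¹ * ∫ ω, G 1 (fun n => if n ∈ J then ε n ω else 0) ∂P
          + 2⁻¹ * ∫ ω, G (-1) (fun n => if n ∈ J then ε n ω else 0) ∂P :=
          key_split P ε hεmeas hεindep hεdist m hm J hJ' hmJ G hG hint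
      _ = 2⁻¹ * ∫ ω, ‖(y + (1:ℝ) • x m) + ∑ n ∈ J, ε n ω • x n‖ ∂P
          + 2⁻¹ * ∫ ω, ‖(y + (-1:ℝ) • x m) + ∑ n ∈ J, ε n ω • x n‖ ∂P := by
          have e1 : ∫ ω, G 1 (fun n => if n ∈ J then ε n ω else 0) ∂P
              = ∫ ω, ‖(y + (1:ℝ) • x m) + ∑ n ∈ J, ε n ω • x n‖ ∂P := by
            apply integral_congr_ae
            apply Filter.Eventually.of_forall
            intro ω
            show ‖y + (1:ℝ) • x m + ∑ n ∈ J, (if n ∈ J then ε n ω else 0) • x n‖ = _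
            rw [hsum ω]
          have e2 : ∫ ω, G (-1) (fun n => if n ∈ J then ε n ω else 0) ∂P
              = ∫ ω, ‖(y + (-1:ℝ) • x m) + ∑ n ∈ J, ε n ω • x n‖ ∂P := by
            apply integral_congr_ae
            apply Filter.Eventually.of_forall
            intro ω
            show ‖y + (-1:ℝ) • x m + ∑ n ∈ J, (if n ∈ J then ε n ω else 0) • x n‖ = _
            rw [hsum ω]
          rw [e1, e2]
      _ = 2⁻¹ ^ (insert m J).card * ∑ A ∈ (insert m J).powerset,
          ‖y + ∑ n ∈ insert m J, (if n ∈ A then (1:ℝ) else -1) • x n‖ := by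
          rw [ih hJ' (y + (1:ℝ) • x m), ih hJ' (y + (-1:ℝ) • x m),
            Finset.card_insert_of_notMem hmJ, Finset.sum_powerset_insert hmJ]
          have hFA : ∀ A ∈ J.powerset,
              ‖y + ∑ n ∈ insert m J, (if n ∈ A then (1:ℝ) else -1) • x n‖
              = ‖(y + (-1:ℝ) • x m) + ∑ n ∈ J, (if n ∈ A then (1:ℝ) else -1) • x n‖ := by
            intro A hA
            rw [Finset.mem_powerset] at hA
            have hmA : m ∉ A := fun h => hmJ (hA h)
            rw [Finset.sum_insert hmJ, if_neg hmA, ← add_assoc]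
          have hFiA : ∀ A ∈ J.powerset,
              ‖y + ∑ n ∈ insert m J, (if n ∈ insert m A then (1:ℝ) else -1) • x n‖
              = ‖(y + (1:ℝ) • x m) + ∑ n ∈ J, (if n ∈ A then (1:ℝ) else -1) • x n‖ := by
            intro A _
            have hss : ∑ n ∈ J, (if n ∈ insert m A then (1:ℝ) else -1) • x n
                = ∑ n ∈ J, (if n ∈ A then (1:ℝ) else -1) • x n := by
              apply Finset.sum_congr rfl
              intro n hn
              have hne : n ≠ m := fun h => hmJ (h ▸ hn)
              simp [Finset.mem_insert, hne]
            rw [Finset.sum_insert hmJ, if_pos (Finset.mem_insert_self _ _), ← add_assoc, hss]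
          rw [Finset.sum_congr rfl hFA, Finset.sum_congr rfl hFiA]
          ring

lemma mds_step {Ω' : Type} [mΩ' : MeasurableSpace Ω'] (P' : Measure Ω') [IsProbabilityMeasure P']
    {B : Type} [NormedAddCommGroup B] [NormedSpace ℝ B]
    {m : MeasurableSpace Ω'} (hm : m ≤ mΩ')
    (g : Ω' → ℝ) (hgmeas : Measurable[mΩ'] g) (hgbdd : ∀ᵐ ω ∂P', |g ω| ≤ 1)
    (hcond : P'[g|m] =ᵐ[P'] 0)
    (w : Ω' → B) (hw : StronglyMeasurable[m] w) (Cw : ℝ) (hwb : ∀ᵐ ω ∂P', ‖w ω‖ ≤ Cw)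
    (z : B) :
    ∫ ω, ‖w ω + g ω • z‖ ∂P' ≤ 2⁻¹ * ∫ ω, ‖w ω + z‖ ∂P' + 2⁻¹ * ∫ ω, ‖w ω - z‖ ∂P' := by
  have hwae : AEStronglyMeasurable[mΩ'] w P' := (hw.mono hm).aestronglyMeasurable
  set F : Ω' → ℝ := fun ω => 2⁻¹ * (‖w ω + z‖ - ‖w ω - z‖) with hF
  have hFsm : StronglyMeasurable[m] F :=
    stronglyMeasurable_const.mul ((hw.add_const z).norm.sub ((hw.sub stronglyMeasurable_const).norm))
  have hFb : ∀ ω, ‖F ω‖ ≤ ‖z‖ := by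
    intro ω
    rw [hF]
    simp only [Real.norm_eq_abs, abs_mul]
    have h1 : |‖w ω + z‖ - ‖w ω - z‖| ≤ ‖(w ω + z) - (w ω - z)‖ := abs_norm_sub_norm_le _ _
    have h2 : (w ω + z) - (w ω - z) = z + z := by abel
    have h3 : ‖z + z‖ ≤ ‖z‖ + ‖z‖ := norm_add_le _ _
    rw [h2] at h1
    rw [abs_of_nonneg (by norm_num : (0:ℝ) ≤ 2⁻¹)]
    linarith
  have hgint : Integrable g P' := by
    refine Integrable.mono' (integrable_const 1) (Measurable.aestronglyMeasurable (μ := P') hgmeas) ?_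
    filter_upwards [hgbdd] with ω hω using by rwa [Real.norm_eq_abs]
  have hint2 : Integrable (fun ω => ‖w ω + z‖) P' := by
    refine Integrable.mono' (integrable_const (Cw + ‖z‖)) (hwae.add_const z).norm ?_
    filter_upwards [hwb] with ω hω
    rw [norm_norm]
    exact (norm_add_le _ _).trans (by gcongr)
  have hint3 : Integrable (fun ω => ‖w ω - z‖) P' := by
    refine Integrable.mono' (integrable_const (Cw + ‖z‖)) (hwae.sub aestronglyMeasurable_const).norm ?_
    filter_upwards [hwb] with ω hω
    rw [norm_norm]
    exact (norm_sub_le _ _).trans (by gcongr)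
  have hFae : AEStronglyMeasurable[mΩ'] F P' := ((hFsm.mono hm)).aestronglyMeasurable
  have hFg : Integrable (fun ω => F ω * g ω) P' := by
    refine Integrable.mono' (integrable_const (‖z‖ * 1)) (hFae.mul (Measurable.aestronglyMeasurable (μ := P') hgmeas)) ?_
    filter_upwards [hgbdd] with ω hω
    rw [Real.norm_eq_abs, abs_mul]
    exact mul_le_mul (hFb ω) hω (abs_nonneg _) (norm_nonneg _)
  have horto : ∫ ω, F ω * g ω ∂P' = 0 := by
    have hpull := condExp_stronglyMeasurable_mul_of_bound hm hFsm hgint ‖z‖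
      (Filter.Eventually.of_forall hFb)
    have h1 : ∫ ω, F ω * g ω ∂P' = ∫ ω, (P'[F * g|m]) ω ∂P' := (integral_condExp hm).symm
    rw [h1]
    have h2 : P'[F * g|m] =ᵐ[P'] 0 := by
      refine hpull.trans ?_
      filter_upwards [hcond] with ω hω
      simp [hω]
    rw [integral_congr_ae h2]
    simp
  have hint1 : Integrable (fun ω => ‖w ω + g ω • z‖) P' := by
    refine Integrable.mono' (integrable_const (Cw + ‖z‖))
      ((hwae.add (StronglyMeasurable.aestronglyMeasurable (μ := P') (hgmeas.stronglyMeasurable.smul_const z))).norm) ?_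
    filter_upwards [hwb, hgbdd] with ω h1 h2
    rw [norm_norm]
    refine (norm_add_le _ _).trans ?_
    rw [norm_smul, Real.norm_eq_abs]
    have : |g ω| * ‖z‖ ≤ 1 * ‖z‖ := by gcongr
    rw [one_mul] at this
    linarith
  have hptwise : ∀ᵐ ω ∂P', ‖w ω + g ω • z‖
      ≤ 2⁻¹ * ‖w ω + z‖ + 2⁻¹ * ‖w ω - z‖ + F ω * g ω := by
    filter_upwards [hgbdd] with ω hω
    have := convex_norm_bound (g ω) hω (w ω) z
    rw [hF]
    simp only []
    nlinarith [this]
  calc ∫ ω, ‖w ω + g ω • z‖ ∂P'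
      ≤ ∫ ω, (2⁻¹ * ‖w ω + z‖ + 2⁻¹ * ‖w ω - z‖ + F ω * g ω) ∂P' := by
        refine integral_mono_ae hint1 ?_ hptwise
        exact ((hint2.const_mul _).add (hint3.const_mul _)).add hFg
    _ = 2⁻¹ * ∫ ω, ‖w ω + z‖ ∂P' + 2⁻¹ * ∫ ω, ‖w ω - z‖ ∂P' := by
        have hI2 : Integrable (fun ω => 2⁻¹ * ‖w ω + z‖) P' := hint2.const_mul _
        have hI3 : Integrable (fun ω => 2⁻¹ * ‖w ω - z‖) P' := hint3.const_mul _
        have hI12 : Integrable (fun ω => 2⁻¹ * ‖w ω + z‖ + 2⁻¹ * ‖w ω - z‖) P' := hI2.add hI3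
        rw [integral_add hI12 hFg, integral_add hI2 hI3,
          MeasureTheory.integral_const_mul, MeasureTheory.integral_const_mul, horto, add_zero]

/-- Let `(d_n)_{n ≥ 0}` be a real-valued martingale difference sequence on
`(Ω', P')` with `𝒜_0` trivial and `|d_n| ≤ 1` a.s., and let `(ε_n)_{n ≥ 1}` be an i.i.d.
sequence of Rademacher variables on `(Ω, P)`. Then for any Banach space `B`, any `k ≥ 1`
and any `x_0, …, x_k ∈ B`,
`∫ ‖d_0 x_0 + ∑_{n=1}^k d_n x_n‖ dP' ≤ ∫ ‖d_0 x_0 + ∑_{n=1}^k ε_n x_n‖ dP`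
(the right-hand side is written on the product `Ω' × Ω` since `d_0` is constant a.s.). -/
theorem mds_dominated_by_rademacher {Ω' : Type} [mΩ' : MeasurableSpace Ω'] (P' : Measure Ω')
    [IsProbabilityMeasure P']
    {Ω : Type} [mΩ : MeasurableSpace Ω] (P : Measure Ω) [IsProbabilityMeasure P]
    (d : ℕ → Ω' → ℝ) (𝒜 : ℕ → MeasurableSpace Ω')
    (hmono : Monotone 𝒜) (hle : ∀ n, 𝒜 n ≤ mΩ') (htriv : 𝒜 0 = ⊥)
    (hadapt : ∀ n, Measurable[𝒜 n] (d n))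
    (hmds : ∀ n, P'[d (n + 1)|𝒜 n] =ᵐ[P'] 0)
    (hbdd : ∀ n, ∀ᵐ ω ∂P', |d n ω| ≤ 1)
    (ε : ℕ → Ω → ℝ) (hεmeas : ∀ n, 1 ≤ n → Measurable (ε n))
    (hεindep : iIndepFun (fun n => ε (n + 1)) P)
    (hεdist : ∀ n, 1 ≤ n → P {ω | ε n ω = 1} = 1 / 2 ∧ P {ω | ε n ω = -1} = 1 / 2)
    (B : Type) [NormedAddCommGroup B] [NormedSpace ℝ B]
    (k : ℕ) (hk : 1 ≤ k) (x : ℕ → B) :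
    ∫ ω, ‖d 0 ω • x 0 + ∑ n ∈ Finset.Icc 1 k, d n ω • x n‖ ∂P'
      ≤ ∫ p, ‖d 0 p.1 • x 0 + ∑ n ∈ Finset.Icc 1 k, ε n p.2 • x n‖ ∂(P'.prod P) := by
  classical
  have hdmeas : ∀ n, Measurable[mΩ'] (d n) := fun n => (hadapt n).mono (hle n) le_rfl
  -- d 0 is constant
  have hne : Nonempty Ω' := by
    by_contra h
    rw [not_nonempty_iff] at h
    have h1 : (Set.univ : Set Ω') = ∅ := Set.univ_eq_empty_iff.mpr h
    have h2 := measure_univ (μ := P')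
    rw [h1, measure_empty] at h2
    exact zero_ne_one h2
  obtain ⟨ω₀⟩ := hne
  set c0 := d 0 ω₀ with hc0
  have hd0 : ∀ ω, d 0 ω = c0 := by
    intro ω
    have hpre : MeasurableSet[𝒜 0] (d 0 ⁻¹' {c0}) := hadapt 0 (measurableSet_singleton _)
    rw [htriv, MeasurableSpace.measurableSet_bot_iff] at hpre
    rcases hpre with h | h
    · have hmem : ω₀ ∈ d 0 ⁻¹' {c0} := by simp [hc0]
      rw [h] at hmem
      exact absurd hmem (Set.notMem_empty _)
    · have : ω ∈ d 0 ⁻¹' {c0} := h ▸ Set.mem_univ ω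
      exact this
  -- the interpolating quantity
  set Φ : ℕ → ℝ := fun j => 2⁻¹ ^ (k - j) * ∑ A ∈ (Finset.Icc (j+1) k).powerset,
      ∫ ω, ‖d 0 ω • x 0 + ∑ n ∈ Finset.Icc 1 j, d n ω • x n
        + ∑ n ∈ Finset.Icc (j+1) k, (if n ∈ A then (1:ℝ) else -1) • x n‖ ∂P' with hΦ
  have hΦk : Φ k = ∫ ω, ‖d 0 ω • x 0 + ∑ n ∈ Finset.Icc 1 k, d n ω • x n‖ ∂P' := by
    rw [hΦ]
    simp only []
    rw [Finset.Icc_eq_empty (by omega), Finset.powerset_empty, Finset.sum_singleton,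
      Nat.sub_self, pow_zero, one_mul]
    simp
  -- the martingale steps
  have hstep : ∀ j, 1 ≤ j → j ≤ k → Φ j ≤ Φ (j - 1) := by
    intro j hj1 hjk
    have hj : j - 1 + 1 = j := by omega
    set w : Finset ℕ → Ω' → B := fun A ω => d 0 ω • x 0
        + ∑ n ∈ Finset.Icc 1 (j-1), d n ω • x n
        + ∑ n ∈ Finset.Icc (j+1) k, (if n ∈ A then (1:ℝ) else -1) • x n with hwdef
    have hwsm : ∀ A, StronglyMeasurable[𝒜 (j-1)] (w A) := by
      intro A
      rw [hwdef]
      apply StronglyMeasurable.add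
      apply StronglyMeasurable.add
      · exact (((hadapt 0).mono (hmono (Nat.zero_le _)) le_rfl).stronglyMeasurable).smul_const _
      · apply Finset.stronglyMeasurable_fun_sum
        intro n hn
        have hn' : n ≤ j - 1 := (Finset.mem_Icc.mp hn).2
        exact (((hadapt n).mono (hmono hn') le_rfl).stronglyMeasurable).smul_const _
      · exact stronglyMeasurable_const
    set Cw : ℝ := ‖x 0‖ + ∑ n ∈ Finset.Icc 1 (j-1), ‖x n‖ + ∑ n ∈ Finset.Icc (j+1) k, ‖x n‖
      with hCw
    have hball : ∀ᵐ ω ∂P', ∀ n ∈ Finset.Icc 0 k, |d n ω| ≤ 1 :=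
      (Finset.eventually_all _).mpr fun n _ => hbdd n
    have hwb : ∀ A, ∀ᵐ ω ∂P', ‖w A ω‖ ≤ Cw := by
      intro A
      filter_upwards [hball] with ω hω
      rw [hwdef, hCw]
      refine (norm_add_le _ _).trans ?_
      gcongr
      · refine (norm_add_le _ _).trans ?_
        gcongr
        · rw [norm_smul, Real.norm_eq_abs]
          calc |d 0 ω| * ‖x 0‖ ≤ 1 * ‖x 0‖ := by
                gcongr; exact hω 0 (Finset.mem_Icc.mpr (by omega))
            _ = ‖x 0‖ := one_mul _
        · refine (norm_sum_le _ _).trans ?_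
          apply Finset.sum_le_sum
          intro n hn
          have hn' := Finset.mem_Icc.mp hn
          rw [norm_smul, Real.norm_eq_abs]
          calc |d n ω| * ‖x n‖ ≤ 1 * ‖x n‖ := by
                gcongr; exact hω n (Finset.mem_Icc.mpr (by omega))
            _ = ‖x n‖ := one_mul _
      · refine (norm_sum_le _ _).trans ?_
        apply Finset.sum_le_sum
        intro n hn
        rw [norm_smul, Real.norm_eq_abs]
        by_cases h : n ∈ A <;> simp [h]
    have hcond : P'[d j|𝒜 (j-1)] =ᵐ[P'] 0 := by
      have hc := hmds (j-1)
      rwa [hj] at hc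
    have hkey : ∀ A ∈ (Finset.Icc (j+1) k).powerset,
        ∫ ω, ‖w A ω + d j ω • x j‖ ∂P'
          ≤ 2⁻¹ * ∫ ω, ‖w A ω + x j‖ ∂P' + 2⁻¹ * ∫ ω, ‖w A ω - x j‖ ∂P' := fun A _ =>
      mds_step P' (hle (j-1)) (d j) (hdmeas j) (hbdd j) hcond (w A) (hwsm A) Cw (hwb A) (x j)
    have hjT : j ∉ Finset.Icc (j+1) k := by simp [Finset.mem_Icc]
    have hIccj : Finset.Icc j k = insert j (Finset.Icc (j+1) k) := by
      ext n; simp only [Finset.mem_Icc, Finset.mem_insert]; omega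
    have hIj : ∀ A : Finset ℕ, ∀ ω : Ω',
        ‖d 0 ω • x 0 + ∑ n ∈ Finset.Icc 1 j, d n ω • x n
          + ∑ n ∈ Finset.Icc (j+1) k, (if n ∈ A then (1:ℝ) else -1) • x n‖
        = ‖w A ω + d j ω • x j‖ := by
      intro A ω
      have hsplit : ∑ n ∈ Finset.Icc 1 j, d n ω • x n
          = ∑ n ∈ Finset.Icc 1 (j-1), d n ω • x n + d j ω • x j := by
        conv_lhs => rw [← hj]
        rw [Finset.sum_Icc_succ_top (by omega), hj]
      rw [hsplit, hwdef]
      congr 1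
      module
    have hfa : ∀ A ∈ (Finset.Icc (j+1) k).powerset,
        (∫ ω, ‖d 0 ω • x 0 + ∑ n ∈ Finset.Icc 1 (j-1), d n ω • x n
          + ∑ n ∈ insert j (Finset.Icc (j+1) k), (if n ∈ A then (1:ℝ) else -1) • x n‖ ∂P')
        = ∫ ω, ‖w A ω - x j‖ ∂P' := by
      intro A hA
      rw [Finset.mem_powerset] at hA
      have hjA : j ∉ A := fun h => hjT (hA h)
      apply integral_congr_ae
      apply Filter.Eventually.of_forall
      intro ω
      have hrepr : w A ω - x j = d 0 ω • x 0 + ∑ n ∈ Finset.Icc 1 (j-1), d n ω • x n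
          + (-x j + ∑ n ∈ Finset.Icc (j+1) k, (if n ∈ A then (1:ℝ) else -1) • x n) := by
        show (d 0 ω • x 0 + ∑ n ∈ Finset.Icc 1 (j-1), d n ω • x n
          + ∑ n ∈ Finset.Icc (j+1) k, (if n ∈ A then (1:ℝ) else -1) • x n) - x j = _
        module
      rw [Finset.sum_insert hjT, if_neg hjA, neg_one_smul]
      simp only [hrepr]
    have hfb : ∀ A ∈ (Finset.Icc (j+1) k).powerset,
        (∫ ω, ‖d 0 ω • x 0 + ∑ n ∈ Finset.Icc 1 (j-1), d n ω • x n
          + ∑ n ∈ insert j (Finset.Icc (j+1) k), (if n ∈ insert j A then (1:ℝ) else -1) • x n‖ ∂P')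
        = ∫ ω, ‖w A ω + x j‖ ∂P' := by
      intro A _
      apply integral_congr_ae
      apply Filter.Eventually.of_forall
      intro ω
      have hss : ∑ n ∈ Finset.Icc (j+1) k, (if n ∈ insert j A then (1:ℝ) else -1) • x n
          = ∑ n ∈ Finset.Icc (j+1) k, (if n ∈ A then (1:ℝ) else -1) • x n := by
        apply Finset.sum_congr rfl
        intro n hn
        have hne : n ≠ j := fun h => hjT (h ▸ hn)
        simp [Finset.mem_insert, hne]
      have hrepr : w A ω + x j = d 0 ω • x 0 + ∑ n ∈ Finset.Icc 1 (j-1), d n ω • x n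
          + (x j + ∑ n ∈ Finset.Icc (j+1) k, (if n ∈ A then (1:ℝ) else -1) • x n) := by
        show (d 0 ω • x 0 + ∑ n ∈ Finset.Icc 1 (j-1), d n ω • x n
          + ∑ n ∈ Finset.Icc (j+1) k, (if n ∈ A then (1:ℝ) else -1) • x n) + x j = _
        module
      rw [Finset.sum_insert hjT, if_pos (Finset.mem_insert_self _ _), one_smul, hss]
      simp only [hrepr]
    have hpow : k - (j - 1) = (k - j) + 1 := by omega
    calc Φ j = 2⁻¹ ^ (k - j) * ∑ A ∈ (Finset.Icc (j+1) k).powerset,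
          ∫ ω, ‖w A ω + d j ω • x j‖ ∂P' := by
          rw [hΦ]
          simp only []
          congr 1
          apply Finset.sum_congr rfl
          intro A _
          exact integral_congr_ae (Filter.Eventually.of_forall fun ω => hIj A ω)
      _ ≤ 2⁻¹ ^ (k - j) * ∑ A ∈ (Finset.Icc (j+1) k).powerset,
          (2⁻¹ * ∫ ω, ‖w A ω + x j‖ ∂P' + 2⁻¹ * ∫ ω, ‖w A ω - x j‖ ∂P') := by
          apply mul_le_mul_of_nonneg_left (Finset.sum_le_sum hkey) (by positivity)
      _ = Φ (j - 1) := by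
          rw [hΦ]
          simp only []
          rw [hj, hpow, pow_succ, hIccj, Finset.sum_powerset_insert hjT,
            Finset.sum_congr rfl hfa, Finset.sum_congr rfl hfb,
            Finset.sum_add_distrib, mul_add, ← Finset.mul_sum, ← Finset.mul_sum]
          ring
  have hchain : ∀ i, Φ k ≤ Φ (k - i) := by
    intro i
    induction i with
    | zero => simp
    | succ i ih =>
      rcases Nat.eq_zero_or_pos (k - i) with h | h
      · have : k - (i + 1) = k - i := by omega
        rw [this]; exact ih
      · have h1 : k - (i + 1) = (k - i) - 1 := by omega
        rw [h1]
        exact ih.trans (hstep (k - i) h (by omega))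
  have hΦ0le : Φ k ≤ Φ 0 := by
    have := hchain k
    rwa [Nat.sub_self] at this
  -- compute Φ 0 and the RHS
  have hcard : (Finset.Icc 1 k).card = k := by rw [Nat.card_Icc]; omega
  have hIcc1 : ∀ n ∈ Finset.Icc 1 k, 1 ≤ n := fun n hn => (Finset.mem_Icc.mp hn).1
  have hΦ0 : Φ 0 = 2⁻¹ ^ k * ∑ A ∈ (Finset.Icc 1 k).powerset,
      ‖c0 • x 0 + ∑ n ∈ Finset.Icc 1 k, (if n ∈ A then (1:ℝ) else -1) • x n‖ := by
    rw [hΦ]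
    simp only [Nat.sub_zero, zero_add]
    congr 1
    apply Finset.sum_congr rfl
    intro A _
    have : ∀ ω : Ω', ‖d 0 ω • x 0 + ∑ n ∈ Finset.Icc 1 0, d n ω • x n
        + ∑ n ∈ Finset.Icc 1 k, (if n ∈ A then (1:ℝ) else -1) • x n‖
        = ‖c0 • x 0 + ∑ n ∈ Finset.Icc 1 k, (if n ∈ A then (1:ℝ) else -1) • x n‖ := by
      intro ω
      rw [hd0 ω, Finset.Icc_eq_empty (by omega), Finset.sum_empty, add_zero]
    rw [integral_congr_ae (Filter.Eventually.of_forall this), integral_const]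
    simp
  have hfmeas : StronglyMeasurable (fun ω : Ω =>
      ‖c0 • x 0 + ∑ n ∈ Finset.Icc 1 k, ε n ω • x n‖) := by
    apply StronglyMeasurable.norm
    exact stronglyMeasurable_const.add (Finset.stronglyMeasurable_fun_sum _ fun n hn =>
      (hεmeas n (hIcc1 n hn)).stronglyMeasurable.smul_const _)
  have hmap : (P'.prod P).map Prod.snd = P := by
    rw [Measure.map_snd_prod, measure_univ, one_smul]
  have hRHS : ∫ p, ‖d 0 p.1 • x 0 + ∑ n ∈ Finset.Icc 1 k, ε n p.2 • x n‖ ∂(P'.prod P)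
      = ∫ ω, ‖c0 • x 0 + ∑ n ∈ Finset.Icc 1 k, ε n ω • x n‖ ∂P := by
    have h1 : ∀ p : Ω' × Ω, ‖d 0 p.1 • x 0 + ∑ n ∈ Finset.Icc 1 k, ε n p.2 • x n‖
        = ‖c0 • x 0 + ∑ n ∈ Finset.Icc 1 k, ε n p.2 • x n‖ := fun p => by rw [hd0 p.1]
    rw [integral_congr_ae (Filter.Eventually.of_forall h1)]
    have h2 : AEStronglyMeasurable (fun ω : Ω =>
        ‖c0 • x 0 + ∑ n ∈ Finset.Icc 1 k, ε n ω • x n‖) ((P'.prod P).map Prod.snd) := by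
      rw [hmap]; exact hfmeas.aestronglyMeasurable
    calc ∫ p : Ω' × Ω, ‖c0 • x 0 + ∑ n ∈ Finset.Icc 1 k, ε n p.2 • x n‖ ∂(P'.prod P)
        = ∫ ω, ‖c0 • x 0 + ∑ n ∈ Finset.Icc 1 k, ε n ω • x n‖ ∂((P'.prod P).map Prod.snd) :=
          (integral_map measurable_snd.aemeasurable h2).symm
      _ = _ := by rw [hmap]
  have hradeq := rad_int P ε hεmeas hεindep hεdist x (Finset.Icc 1 k) hIcc1 (c0 • x 0)
  rw [← hΦk, hRHS, hradeq, hcard, ← hΦ0]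
  exact hΦ0le
end

section
/- Let (d_n)_{n≥0} be a real-valued martingale difference sequence on (Ω', 𝒜', P') with respect to an increasing filtration (𝒜_n), with 𝒜_0 trivial, such that |d_n| ≤ 1 almost surely for every n. Let (ε_n)_{n≥1} be an i.i.d. sequence of Rademacher variables on (Ω, 𝒜, P). Then there exists a bounded linear operator u : L¹(Ω, 𝒜, P) → L¹(Ω', 𝒜', P') with ‖u‖ = 1 such that u(1) = 1 and u(ε_n) = d_n for all n ≥ 1. In particular, every [−1,1]-valued martingale difference sequence is 1-dominated by the Rademacher sequence. -/
open MeasureTheory ProbabilityTheory Filter Finset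
open scoped ENNReal Topology

namespace MDS12

variable {α : Type} [m0 : MeasurableSpace α] {μ : Measure α} [IsProbabilityMeasure μ]

lemma pm_one_ae {g : α → ℝ} (hmeas : Measurable g)
    (h1 : μ {ω | g ω = 1} = 1/2) (h2 : μ {ω | g ω = -1} = 1/2) :
    ∀ᵐ ω ∂μ, g ω = 1 ∨ g ω = -1 := by
  have hA : MeasurableSet {ω | g ω = 1} := hmeas (measurableSet_singleton 1)
  have hB : MeasurableSet {ω | g ω = -1} := hmeas (measurableSet_singleton (-1))
  have hdisj : Disjoint {ω | g ω = 1} {ω | g ω = -1} := by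
    rw [Set.disjoint_left]
    rintro ω (ha : g ω = 1) (hb : g ω = -1)
    rw [ha] at hb; norm_num at hb
  have hunion : μ ({ω | g ω = 1} ∪ {ω | g ω = -1}) = 1 := by
    rw [measure_union hdisj hB, h1, h2]
    rw [ENNReal.div_add_div_same]
    norm_num
    exact ENNReal.div_self two_ne_zero ENNReal.ofNat_ne_top
  have hcompl : μ ({ω | g ω = 1} ∪ {ω | g ω = -1})ᶜ = 0 := by
    rw [measure_compl (hA.union hB) (measure_ne_top _ _), hunion, measure_univ, tsub_self]
  rw [ae_iff]
  have hset : {ω | ¬(g ω = 1 ∨ g ω = -1)} = ({ω | g ω = 1} ∪ {ω | g ω = -1})ᶜ := by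
    ext ω; simp [not_or]
  rw [hset]
  exact hcompl

lemma integral_pm_one {g : α → ℝ} (hmeas : Measurable g) (hint : Integrable g μ)
    (h1 : μ {ω | g ω = 1} = 1/2) (h2 : μ {ω | g ω = -1} = 1/2) :
    ∫ ω, g ω ∂μ = 0 := by
  have hA : MeasurableSet {ω | g ω = 1} := hmeas (measurableSet_singleton 1)
  have hB : MeasurableSet {ω | g ω = -1} := hmeas (measurableSet_singleton (-1))
  have hdisj : Disjoint {ω | g ω = 1} {ω | g ω = -1} := by
    rw [Set.disjoint_left]
    rintro ω (ha : g ω = 1) (hb : g ω = -1)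
    rw [ha] at hb; norm_num at hb
  have hae := pm_one_ae hmeas h1 h2
  have heq : g =ᵐ[μ] fun ω => Set.indicator {ω | g ω = 1} (fun _ => (1:ℝ)) ω
      + Set.indicator {ω | g ω = -1} (fun _ => (-1:ℝ)) ω := by
    filter_upwards [hae] with ω hω
    rcases hω with h | h
    · have hnb : ω ∉ {ω | g ω = -1} := fun hb => hdisj.ne_of_mem h hb rfl
      simp [Set.indicator_of_mem (show ω ∈ {ω | g ω = 1} from h),
        Set.indicator_of_notMem hnb, h]
    · have hna : ω ∉ {ω | g ω = 1} := fun ha => hdisj.ne_of_mem ha h rfl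
      simp [Set.indicator_of_mem (show ω ∈ {ω | g ω = -1} from h),
        Set.indicator_of_notMem hna, h]
  rw [integral_congr_ae heq, integral_add
      ((integrable_const (1:ℝ)).indicator hA) ((integrable_const (-1:ℝ)).indicator hB),
    integral_indicator_const _ hA, integral_indicator_const _ hB, measureReal_def, measureReal_def, h1, h2]
  simp [ENNReal.toReal_div]

lemma integral_mul_condexp {m : MeasurableSpace α} (hm : m ≤ m0) {h f : α → ℝ}
    (hh : StronglyMeasurable[m] h) (hbound : ∀ᵐ ω ∂μ, |h ω| ≤ 1) (hf : Integrable f μ) :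
    ∫ ω, h ω * (μ[f|m]) ω ∂μ = ∫ ω, h ω * f ω ∂μ := by
  haveI : SigmaFinite (μ.trim hm) := inferInstance
  have hint : Integrable (h * f) μ := hf.bdd_mul (c := 1)
      (hh.mono hm).aestronglyMeasurable (by simpa [Real.norm_eq_abs] using hbound)
  have hpull := condExp_mul_of_stronglyMeasurable_left hh hint hf
  calc ∫ ω, h ω * (μ[f|m]) ω ∂μ = ∫ ω, (μ[h * f|m]) ω ∂μ := by
        refine (integral_congr_ae ?_)
        filter_upwards [hpull] with ω hω
        rw [hω]; rfl
    _ = ∫ ω, (h * f) ω ∂μ := integral_condExp hm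
    _ = ∫ ω, h ω * f ω ∂μ := rfl

lemma walsh_integral_zero {e : ℕ → α → ℝ} (hmeas : ∀ i, Measurable (e i))
    (hindep : iIndepFun e μ)
    (hzero : ∀ i, ∫ ω, e i ω ∂μ = 0)
    (S : Finset ℕ) (hS : S.Nonempty) :
    ∫ ω, ∏ i ∈ S, e i ω ∂μ = 0 := by
  obtain ⟨m, hm⟩ := hS
  have hind : IndepFun (∏ j ∈ S.erase m, e j) (e m) μ :=
    hindep.indepFun_finset_prod_of_notMem hmeas (Finset.notMem_erase m S)
  have hprodmeas : Measurable (∏ j ∈ S.erase m, e j) := by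
    rw [Finset.prod_fn]
    exact Finset.measurable_prod _ fun i _ => hmeas i
  have hmul := hind.integral_mul_eq_mul_integral hprodmeas.aestronglyMeasurable (hmeas m).aestronglyMeasurable
  have heq : (fun ω => ∏ i ∈ S, e i ω) = fun ω => (∏ j ∈ S.erase m, e j) ω * e m ω := by
    funext ω
    rw [Finset.prod_apply]
    exact (Finset.prod_erase_mul S _ hm).symm
  rw [heq]
  rw [show (∫ ω, (∏ j ∈ S.erase m, e j) ω * e m ω ∂μ) = ∫ ω, ((∏ j ∈ S.erase m, e j) * e m) ω ∂μ from rfl]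
  rw [hmul, hzero m, mul_zero]

lemma mds_prod_integral {𝒜 : ℕ → MeasurableSpace α} (hmono : Monotone 𝒜) (hle : ∀ n, 𝒜 n ≤ m0)
    {d : ℕ → α → ℝ} (hadapt : ∀ n, Measurable[𝒜 n] (d n))
    (hmds : ∀ n, μ[d (n + 1)|𝒜 n] =ᵐ[μ] 0)
    (hbdd : ∀ n, ∀ᵐ ω ∂μ, |d n ω| ≤ 1) (hdint : ∀ n, Integrable (d n) μ)
    (S : Finset ℕ) (hS : S.Nonempty) :
    ∫ ω, ∏ i ∈ S, d (i + 1) ω ∂μ = 0 := by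
  set m := S.max' hS with hmdef
  have hmS : m ∈ S := S.max'_mem hS
  set h : α → ℝ := fun ω => ∏ i ∈ S.erase m, d (i + 1) ω with hh
  have hhm : StronglyMeasurable[𝒜 m] h := by
    refine Measurable.stronglyMeasurable ?_
    refine Finset.measurable_prod _ fun i hi => ?_
    have hilt : i < m := lt_of_le_of_ne (S.le_max' i (Finset.mem_of_mem_erase hi))
        (Finset.ne_of_mem_erase hi)
    exact (hadapt (i + 1)).mono (hmono hilt) le_rfl
  have hbound : ∀ᵐ ω ∂μ, |h ω| ≤ 1 := by
    have : ∀ᵐ ω ∂μ, ∀ i, i ∈ S.erase m → |d (i + 1) ω| ≤ 1 :=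
      ae_all_iff.2 fun i => (hbdd (i + 1)).mono fun ω hω _ => hω
    filter_upwards [this] with ω hω
    rw [hh]
    simp only
    rw [Finset.abs_prod]
    exact Finset.prod_le_one (fun i _ => abs_nonneg _) fun i hi => hω i hi
  have hsplit : (fun ω => ∏ i ∈ S, d (i + 1) ω) = fun ω => h ω * d (m + 1) ω := by
    funext ω
    exact (Finset.prod_erase_mul S _ hmS).symm
  rw [hsplit, ← integral_mul_condexp (hle m) hhm hbound (hdint (m + 1))]
  have : (fun ω => h ω * (μ[d (m + 1)|𝒜 m]) ω) =ᵐ[μ] 0 := by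
    filter_upwards [hmds m] with ω hω
    simp [hω]
  rw [integral_congr_ae this]
  simp

lemma key {Ω' : Type} [mΩ' : MeasurableSpace Ω'] {P' : Measure Ω'} [IsProbabilityMeasure P']
    {Ω : Type} [mΩ : MeasurableSpace Ω] {P : Measure Ω} [IsProbabilityMeasure P]
    (dd : ℕ → Ω' → ℝ) (e : ℕ → Ω → ℝ)
    (hdmeas : ∀ i, Measurable (dd i))
    (hdbdd : ∀ i, ∀ᵐ ω' ∂P', |dd i ω'| ≤ 1)
    (hDzero : ∀ S : Finset ℕ, S.Nonempty → ∫ ω', ∏ i ∈ S, dd i ω' ∂P' = 0)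
    (hemeas : ∀ i, Measurable (e i))
    (heindep : iIndepFun e P)
    (hepm : ∀ i, ∀ᵐ ω ∂P, e i ω = 1 ∨ e i ω = -1)
    (hezero : ∀ i, ∫ ω, e i ω ∂P = 0)
    (hemem : ∀ i, MemLp (e i) 1 P) (hdmem : ∀ i, MemLp (dd i) 1 P') :
    ∃ u : Lp ℝ 1 P →L[ℝ] Lp ℝ 1 P',
      ‖u‖ = 1 ∧
      u ((memLp_const (1 : ℝ)).toLp (fun _ => (1 : ℝ)))
        = (memLp_const (1 : ℝ)).toLp (fun _ => (1 : ℝ)) ∧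
      ∀ n, u ((hemem n).toLp (e n)) = (hdmem n).toLp (dd n) := by
  classical
  -- Walsh functions and products of the d's
  set W : Finset ℕ → Ω → ℝ := fun S ω => ∏ i ∈ S, e i ω with hWdef
  set D : Finset ℕ → Ω' → ℝ := fun S ω' => ∏ i ∈ S, dd i ω' with hDdef
  have hWmeas : ∀ S, Measurable (W S) := fun S =>
    Finset.measurable_prod _ fun i _ => hemeas i
  have hDmeas : ∀ S, Measurable (D S) := fun S =>
    Finset.measurable_prod _ fun i _ => hdmeas i
  have hWbdd : ∀ S, ∀ᵐ ω ∂P, |W S ω| ≤ 1 := by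
    intro S
    have h : ∀ᵐ ω ∂P, ∀ i, i ∈ S → (e i ω = 1 ∨ e i ω = -1) :=
      ae_all_iff.2 fun i => (hepm i).mono fun ω hω _ => hω
    filter_upwards [h] with ω hω
    rw [hWdef]
    simp only
    rw [Finset.abs_prod]
    refine Finset.prod_le_one (fun i _ => abs_nonneg _) fun i hi => ?_
    rcases hω i hi with h1 | h1 <;> rw [h1] <;> norm_num
  have hDbdd : ∀ S, ∀ᵐ ω' ∂P', |D S ω'| ≤ 1 := by
    intro S
    have h : ∀ᵐ ω' ∂P', ∀ i, i ∈ S → |dd i ω'| ≤ 1 :=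
      ae_all_iff.2 fun i => (hdbdd i).mono fun ω hω _ => hω
    filter_upwards [h] with ω hω
    rw [hDdef]
    simp only
    rw [Finset.abs_prod]
    exact Finset.prod_le_one (fun i _ => abs_nonneg _) fun i hi => hω i hi
  have hWint : ∀ S, Integrable (W S) P := fun S =>
    memLp_one_iff_integrable.1 <| MemLp.of_bound (hWmeas S).aestronglyMeasurable 1 <|
      (hWbdd S).mono fun ω h => by simpa [Real.norm_eq_abs] using h
  have hDmem' : ∀ S, MemLp (D S) 1 P' := fun S =>
    MemLp.of_bound (hDmeas S).aestronglyMeasurable 1 <|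
      (hDbdd S).mono fun ω h => by simpa [Real.norm_eq_abs] using h
  have hDint : ∀ S, Integrable (D S) P' := fun S => memLp_one_iff_integrable.1 (hDmem' S)
  set DL : Finset ℕ → Lp ℝ 1 P' := fun S => (hDmem' S).toLp (D S) with hDLdef
  -- integrability of products with Walsh functions
  have hmul : ∀ {f : Ω → ℝ}, Integrable f P → ∀ S, Integrable (fun ω => f ω * W S ω) P := by
    intro f hf S
    have := hf.bdd_mul (c := 1) (hWmeas S).aestronglyMeasurable
      ((hWbdd S).mono fun ω h => by simpa [Real.norm_eq_abs] using h)
    exact this.congr <| Eventually.of_forall fun ω => mul_comm _ _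
  -- the finite-stage operators
  set U : ℕ → (Ω → ℝ) → Lp ℝ 1 P' :=
    fun N f => ∑ S ∈ (range N).powerset, (∫ ω, f ω * W S ω ∂P) • DL S with hUdef
  -- U depends only on a.e. class
  have hUcongr : ∀ N {f g : Ω → ℝ}, f =ᵐ[P] g → U N f = U N g := by
    intro N f g hfg
    refine Finset.sum_congr rfl fun S _ => ?_
    congr 1
    exact integral_congr_ae (hfg.mul EventuallyEq.rfl)
  -- additivity
  have hUadd : ∀ N (f g : Ω → ℝ), Integrable f P → Integrable g P →
      U N (fun ω => f ω + g ω) = U N f + U N g := by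
    intro N f g hf hg
    rw [hUdef]
    simp only
    rw [← Finset.sum_add_distrib]
    refine Finset.sum_congr rfl fun S _ => ?_
    rw [← add_smul]
    congr 1
    rw [← integral_add (hmul hf S) (hmul hg S)]
    exact integral_congr_ae <| Eventually.of_forall fun ω => add_mul _ _ _
  have hUsmul : ∀ N (r : ℝ) (f : Ω → ℝ), Integrable f P →
      U N (fun ω => r * f ω) = r • U N f := by
    intro N r f hf
    rw [hUdef]
    simp only
    rw [Finset.smul_sum]
    refine Finset.sum_congr rfl fun S _ => ?_
    rw [smul_smul]
    congr 1
    rw [← integral_const_mul]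
    exact integral_congr_ae <| Eventually.of_forall fun ω => by ring
  have hUsub : ∀ N (f g : Ω → ℝ), Integrable f P → Integrable g P →
      U N (fun ω => f ω - g ω) = U N f - U N g := by
    intro N f g hf hg
    have h1 : U N (fun ω => (fun ω => f ω - g ω) ω + g ω) = U N (fun ω => f ω - g ω) + U N g :=
      hUadd N _ g (hf.sub hg) hg
    have h2 : (fun ω => (fun ω => f ω - g ω) ω + g ω) = f := by
      funext ω; simp
    rw [h2] at h1
    rw [eq_sub_iff_add_eq]
    exact h1.symm
  -- coercion of U N f
  have hsum_coe : ∀ (s : Finset (Finset ℕ)) (g : Finset ℕ → Lp ℝ 1 P'),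
      (↑↑(∑ S ∈ s, g S) : Ω' → ℝ) =ᵐ[P'] fun ω' => ∑ S ∈ s, (g S : Ω' → ℝ) ω' := by
    intro s g
    induction s using Finset.induction_on with
    | empty => simp only [Finset.sum_empty]; exact Lp.coeFn_zero (E := ℝ) (p := 1) (μ := P')
    | @insert a s' hnotmem ih =>
        rw [Finset.sum_insert hnotmem]
        refine (Lp.coeFn_add _ _).trans ?_
        filter_upwards [ih] with ω' hω'
        simp only [Pi.add_apply, hω', Finset.sum_insert hnotmem]
  have hUcoe : ∀ N (f : Ω → ℝ), (↑↑(U N f) : Ω' → ℝ) =ᵐ[P']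
      fun ω' => ∑ S ∈ (range N).powerset, (∫ ω, f ω * W S ω ∂P) * D S ω' := by
    intro N f
    refine (hsum_coe _ _).trans ?_
    have h1 : ∀ᵐ ω' ∂P', ∀ S ∈ (range N).powerset,
        ((((∫ ω, f ω * W S ω ∂P) • DL S : Lp ℝ 1 P')) : Ω' → ℝ) ω'
          = (∫ ω, f ω * W S ω ∂P) * D S ω' := by
      rw [eventually_all_finset]
      intro S _
      filter_upwards [Lp.coeFn_smul (∫ ω, f ω * W S ω ∂P) (DL S), (hDmem' S).coeFn_toLp]
        with ω' h2 h3
      rw [h2]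
      simp only [Pi.smul_apply, smul_eq_mul]
      exact congrArg _ h3
    filter_upwards [h1] with ω' h
    exact Finset.sum_congr rfl fun S hS => h S hS
  -- orthogonality
  have hsq : ∀ n, (fun ω => e n ω * e n ω) =ᵐ[P] fun _ => (1:ℝ) := by
    intro n
    filter_upwards [hepm n] with ω hω
    rcases hω with h | h <;> rw [h] <;> norm_num
  have horth : ∀ n (S : Finset ℕ), S ≠ {n} → ∫ ω, e n ω * W S ω ∂P = 0 := by
    intro n S hne
    by_cases hn : n ∈ S
    · have heq : (fun ω => e n ω * W S ω) =ᵐ[P] W (S.erase n) := by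
        filter_upwards [hsq n] with ω hω
        have hprod : W (S.erase n) ω * e n ω = W S ω := by
          simp only [hWdef]
          exact Finset.prod_erase_mul S _ hn
        calc e n ω * W S ω = e n ω * (W (S.erase n) ω * e n ω) := by rw [hprod]
          _ = (e n ω * e n ω) * W (S.erase n) ω := by ring
          _ = W (S.erase n) ω := by rw [hω]; ring
      rw [integral_congr_ae heq]
      have hnonempty : (S.erase n).Nonempty := by
        rw [Finset.nonempty_iff_ne_empty]
        intro hempty
        rcases (Finset.erase_eq_empty_iff S n).1 hempty with h | h
        · rw [h] at hn; exact absurd hn (Finset.notMem_empty n)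
        · exact hne h
      simp only [hWdef]
      exact walsh_integral_zero hemeas heindep hezero _ hnonempty
    · have heq : (fun ω => e n ω * W S ω) = W (insert n S) := by
        funext ω
        simp only [hWdef]
        exact (Finset.prod_insert (f := fun i => e i ω) hn).symm
      rw [heq]
      simp only [hWdef]
      exact walsh_integral_zero hemeas heindep hezero _ (Finset.insert_nonempty n S)
  have hone : ∀ n, ∫ ω, e n ω * W {n} ω ∂P = 1 := by
    intro n
    have heq : (fun ω => e n ω * W {n} ω) =ᵐ[P] fun _ => (1:ℝ) := by
      filter_upwards [hsq n] with ω hω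
      simp only [hWdef, Finset.prod_singleton]
      exact hω
    rw [integral_congr_ae heq]
    simp
  -- values
  have hU1 : ∀ N, U N (fun _ => (1:ℝ)) = (memLp_const (1 : ℝ)).toLp (fun _ => (1:ℝ)) := by
    intro N
    rw [hUdef]
    simp only
    rw [Finset.sum_eq_single_of_mem ∅ (Finset.empty_mem_powerset _)]
    · have hc : ∫ ω, (fun _ => (1:ℝ)) ω * W ∅ ω ∂P = 1 := by
        simp [hWdef]
      rw [hc, one_smul, hDLdef]
      exact MemLp.toLp_congr _ _ (Eventually.of_forall fun ω' => by simp [hDdef])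
    · intro S _ hne
      have h0 : ∫ ω, (fun _ => (1:ℝ)) ω * W S ω ∂P = 0 := by
        simp only [one_mul, hWdef]
        exact walsh_integral_zero hemeas heindep hezero S (Finset.nonempty_iff_ne_empty.2 hne)
      rw [h0, zero_smul]
  have hUe : ∀ N n, n < N → U N (e n) = (hdmem n).toLp (dd n) := by
    intro N n hn
    rw [hUdef]
    simp only
    rw [Finset.sum_eq_single_of_mem {n}
      (Finset.mem_powerset.2 (Finset.singleton_subset_iff.2 (Finset.mem_range.2 hn)))]
    · rw [hone n, one_smul, hDLdef]
      exact MemLp.toLp_congr _ _ (Eventually.of_forall fun ω' => by simp [hDdef])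
    · intro S _ hne
      rw [horth n S hne, zero_smul]
  -- filtration generated by the e's
  set mN : ℕ → MeasurableSpace Ω :=
    fun N => ⨆ i ∈ (↑(range N) : Set ℕ), MeasurableSpace.comap (e i) inferInstance with hmNdef
  have hmNmono : Monotone mN := by
    intro N M hNM
    refine iSup₂_le fun i hi => ?_
    refine le_biSup (f := fun j => MeasurableSpace.comap (e j) inferInstance) (i := i) ?_
    simp only [Finset.coe_range, Set.mem_Iio] at hi ⊢
    exact lt_of_lt_of_le hi hNM
  have hmNle : ∀ N, mN N ≤ mΩ := fun N => iSup₂_le fun i _ => (hemeas i).comap_le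
  set ℱ : Filtration ℕ mΩ := ⟨mN, hmNmono, hmNle⟩ with hFdef
  have hWsm : ∀ N S, S ⊆ range N → StronglyMeasurable[mN N] (W S) := by
    intro N S hS
    refine Measurable.stronglyMeasurable ?_
    simp only [hWdef]
    refine Finset.measurable_prod _ fun i hi => ?_
    have hcomap : MeasurableSpace.comap (e i) inferInstance ≤ mN N :=
      le_biSup (f := fun j => MeasurableSpace.comap (e j) inferInstance)
        (Finset.mem_coe.2 (hS hi))
    exact (measurable_iff_comap_le.2 le_rfl).mono hcomap le_rfl
  -- conditional expectation invariance
  have hUcond : ∀ N (f : Ω → ℝ), Integrable f P → U N (P[f | mN N]) = U N f := by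
    intro N f hf
    refine Finset.sum_congr rfl fun S hS => ?_
    congr 1
    have h := integral_mul_condexp (hmNle N) (hWsm N S (Finset.mem_powerset.1 hS)) (hWbdd S) hf
    calc ∫ ω, (P[f|mN N]) ω * W S ω ∂P = ∫ ω, W S ω * (P[f|mN N]) ω ∂P := by
          simp_rw [mul_comm]
      _ = ∫ ω, W S ω * f ω ∂P := h
      _ = ∫ ω, f ω * W S ω ∂P := by simp_rw [mul_comm]
  -- consistency
  have hUconsist : ∀ N M, N ≤ M → ∀ g : Ω → ℝ, Integrable g P →
      StronglyMeasurable[mN N] g → U M g = U N g := by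
    intro N M hNM g hgint hgm
    rw [hUdef]
    simp only
    refine (Finset.sum_subset (Finset.powerset_mono.2 (Finset.range_subset_range.2 hNM)) ?_).symm
    intro S hSM hSN
    suffices h : ∫ ω, g ω * W S ω ∂P = 0 by rw [h, zero_smul]
    rw [Finset.mem_powerset] at hSN
    set S₁ := S.filter (fun i => i < N) with hS1def
    set S₂ := S.filter (fun i => ¬ i < N) with hS2def
    have hS2ne : S₂.Nonempty := by
      rw [hS2def, Finset.filter_nonempty_iff]
      by_contra hco
      push_neg at hco
      exact hSN fun i hi => Finset.mem_range.2 (hco i hi)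
    have hz : ∫ ω, W S₂ ω ∂P = 0 := by
      simp only [hWdef]
      exact walsh_integral_zero hemeas heindep hezero S₂ hS2ne
    have hsplit : ∀ ω, W S ω = W S₁ ω * W S₂ ω := by
      intro ω
      simp only [hWdef, hS1def, hS2def]
      exact (Finset.prod_filter_mul_prod_filter_not S _ _).symm
    have hS1sub : S₁ ⊆ range N := fun i hi =>
      Finset.mem_range.2 (Finset.mem_filter.1 hi).2
    have hm1 : StronglyMeasurable[mN N] (fun ω => g ω * W S₁ ω) :=
      hgm.mul (hWsm N S₁ hS1sub)
    set mT : MeasurableSpace Ω :=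
      ⨆ i ∈ (↑S₂ : Set ℕ), MeasurableSpace.comap (e i) inferInstance with hmTdef
    have hm2 : Measurable[mT] (W S₂) := by
      simp only [hWdef]
      refine Finset.measurable_prod _ fun i hi => ?_
      exact (measurable_iff_comap_le.2 le_rfl).mono
        (le_biSup (f := fun j => MeasurableSpace.comap (e j) inferInstance)
          (Finset.mem_coe.2 hi)) le_rfl
    have hdisj : Disjoint (↑(range N) : Set ℕ) (↑S₂ : Set ℕ) := by
      rw [Set.disjoint_left]
      intro i hi1 hi2
      simp only [Finset.coe_range, Set.mem_Iio] at hi1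
      exact (Finset.mem_filter.1 (Finset.mem_coe.1 hi2)).2 hi1
    have hIndep : Indep (mN N) mT P :=
      indep_iSup_of_disjoint (fun i => (hemeas i).comap_le) heindep.iIndep hdisj
    have hIndepF : IndepFun (fun ω => g ω * W S₁ ω) (W S₂) P := by
      rw [IndepFun_iff_Indep]
      exact indep_of_indep_of_le_right
        (indep_of_indep_of_le_left hIndep (measurable_iff_comap_le.1 hm1.measurable))
        (measurable_iff_comap_le.1 hm2)
    have hcalc : ∫ ω, g ω * W S ω ∂P
        = (∫ ω, g ω * W S₁ ω ∂P) * ∫ ω, W S₂ ω ∂P := by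
      rw [← hIndepF.integral_mul_eq_mul_integral ((hm1.mono (hmNle N)).aestronglyMeasurable)
        (hWmeas S₂).aestronglyMeasurable]
      refine integral_congr_ae (Eventually.of_forall fun ω => ?_)
      show g ω * W S ω = (fun ω => g ω * W S₁ ω) ω * W S₂ ω
      rw [hsplit ω]
      ring
    rw [hcalc, hz, mul_zero]
  -- the L¹ norm bound
  have hUnorm : ∀ N (f : Ω → ℝ), Integrable f P → ‖U N f‖ ≤ (eLpNorm f 1 P).toReal := by
    intro N f hf
    set K : Ω → Ω' → ℝ := fun ω ω' => ∏ i ∈ range N, (1 + e i ω * dd i ω') with hKdef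
    have hKexp : ∀ ω ω', K ω ω' = ∑ S ∈ (range N).powerset, W S ω * D S ω' := by
      intro ω ω'
      simp only [hKdef, hWdef, hDdef]
      calc (∏ i ∈ range N, (1 + e i ω * dd i ω'))
          = ∏ i ∈ range N, ((fun i => e i ω * dd i ω') i + (fun _ => (1:ℝ)) i) := by
            refine Finset.prod_congr rfl fun i _ => ?_
            simp [add_comm]
        _ = ∑ S ∈ (range N).powerset,
              (∏ i ∈ S, e i ω * dd i ω') * ∏ i ∈ (range N) \ S, (1:ℝ) :=
            Finset.prod_add _ _ _
        _ = ∑ S ∈ (range N).powerset, (∏ i ∈ S, e i ω) * (∏ i ∈ S, dd i ω') := by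
            refine Finset.sum_congr rfl fun S _ => ?_
            rw [Finset.prod_const_one, mul_one, Finset.prod_mul_distrib]
    have hstepA : ∀ ω', ∑ S ∈ (range N).powerset, (∫ ω, f ω * W S ω ∂P) * D S ω'
        = ∫ ω, f ω * K ω ω' ∂P := by
      intro ω'
      calc ∑ S ∈ (range N).powerset, (∫ ω, f ω * W S ω ∂P) * D S ω'
          = ∑ S ∈ (range N).powerset, ∫ ω, f ω * W S ω * D S ω' ∂P := by
            refine Finset.sum_congr rfl fun S _ => ?_
            rw [← integral_mul_const]
        _ = ∫ ω, ∑ S ∈ (range N).powerset, f ω * W S ω * D S ω' ∂P :=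
            (integral_finset_sum _ fun S _ => (hmul hf S).mul_const _).symm
        _ = ∫ ω, f ω * K ω ω' ∂P := by
            refine integral_congr_ae (Eventually.of_forall fun ω => ?_)
            show ∑ S ∈ (range N).powerset, f ω * W S ω * D S ω' = f ω * K ω ω'
            rw [hKexp, Finset.mul_sum]
            exact Finset.sum_congr rfl fun S _ => by ring
    have hUcoe2 : (↑↑(U N f) : Ω' → ℝ) =ᵐ[P'] fun ω' => ∫ ω, f ω * K ω ω' ∂P :=
      (hUcoe N f).trans (Eventually.of_forall hstepA)
    rw [Lp.norm_def, eLpNorm_congr_ae hUcoe2]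
    have hdgood : ∀ᵐ ω' ∂P', ∀ i, i ∈ range N → |dd i ω'| ≤ 1 :=
      ae_all_iff.2 fun i => (hdbdd i).mono fun ω' h _ => h
    have hegood : ∀ᵐ ω ∂P, ∀ i, i ∈ range N → (e i ω = 1 ∨ e i ω = -1) :=
      ae_all_iff.2 fun i => (hepm i).mono fun ω h _ => h
    have habs1 : ∀ (ω : Ω) (ω' : Ω') i, i ∈ range N → (e i ω = 1 ∨ e i ω = -1) →
        |dd i ω'| ≤ 1 → |e i ω * dd i ω'| ≤ 1 := by
      intro ω ω' i _ he hd
      rw [abs_mul]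
      rcases he with h | h <;> rw [h] <;> simpa using hd
    have hKpos : ∀ ω ω', (∀ i, i ∈ range N → (e i ω = 1 ∨ e i ω = -1)) →
        (∀ i, i ∈ range N → |dd i ω'| ≤ 1) → 0 ≤ K ω ω' := by
      intro ω ω' he hd
      refine Finset.prod_nonneg fun i hi => ?_
      have h1 := habs1 ω ω' i hi (he i hi) (hd i hi)
      have := abs_le.1 h1
      linarith [this.1]
    have hmain : eLpNorm (fun ω' => ∫ ω, f ω * K ω ω' ∂P) 1 P' ≤ eLpNorm f 1 P := by
      rw [eLpNorm_one_eq_lintegral_enorm, eLpNorm_one_eq_lintegral_enorm]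
      have hKm : Measurable (fun p : Ω × Ω' => K p.1 p.2) := by
        simp only [hKdef]
        refine Finset.measurable_prod _ fun i _ => ?_
        exact measurable_const.add (((hemeas i).comp measurable_fst).mul
          ((hdmeas i).comp measurable_snd))
      have hfm : AEMeasurable (fun p : Ω × Ω' => f p.1) (P.prod P') :=
        (hf.aestronglyMeasurable.aemeasurable).comp_quasiMeasurePreserving
          Measure.quasiMeasurePreserving_fst
      have hAEM : AEMeasurable
          (Function.uncurry fun ω ω' => ENNReal.ofReal (|f ω| * K ω ω')) (P.prod P') :=
        ENNReal.measurable_ofReal.comp_aemeasurable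
          ((measurable_abs.comp_aemeasurable hfm).mul hKm.aemeasurable)
      calc ∫⁻ ω', ‖∫ ω, f ω * K ω ω' ∂P‖ₑ ∂P'
          ≤ ∫⁻ ω', (∫⁻ ω, ENNReal.ofReal (|f ω| * K ω ω') ∂P) ∂P' := by
            refine lintegral_mono_ae ?_
            filter_upwards [hdgood] with ω' hd
            refine le_trans (enorm_integral_le_lintegral_enorm _) ?_
            refine lintegral_mono_ae ?_
            filter_upwards [hegood] with ω he
            rw [Real.enorm_eq_ofReal_abs, abs_mul, abs_of_nonneg (hKpos ω ω' he hd)]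
        _ = ∫⁻ ω, (∫⁻ ω', ENNReal.ofReal (|f ω| * K ω ω') ∂P') ∂P :=
            (lintegral_lintegral_swap hAEM).symm
        _ ≤ ∫⁻ ω, ENNReal.ofReal |f ω| ∂P := by
            refine lintegral_mono_ae ?_
            filter_upwards [hegood] with ω he
            have hKm1 : Measurable (fun ω' => K ω ω') := by
              simp only [hKdef]
              exact Finset.measurable_prod _ fun i _ =>
                measurable_const.add ((hdmeas i).const_mul _)
            have hKint : Integrable (fun ω' => K ω ω') P' := by
              refine memLp_one_iff_integrable.1 <|
                MemLp.of_bound hKm1.aestronglyMeasurable ((2:ℝ) ^ N) ?_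
              filter_upwards [hdgood] with ω' hd
              rw [Real.norm_eq_abs]
              simp only [hKdef]
              rw [Finset.abs_prod]
              calc ∏ i ∈ range N, |1 + e i ω * dd i ω'|
                  ≤ ∏ _i ∈ range N, (2:ℝ) := by
                    refine Finset.prod_le_prod (fun i _ => abs_nonneg _) fun i hi => ?_
                    have h1 := habs1 ω ω' i hi (he i hi) (hd i hi)
                    calc |1 + e i ω * dd i ω'| ≤ |(1:ℝ)| + |e i ω * dd i ω'| := abs_add_le _ _
                      _ ≤ 2 := by rw [abs_one]; linarith
                _ = (2:ℝ) ^ N := by rw [Finset.prod_const, Finset.card_range]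
            have hKnn : 0 ≤ᵐ[P'] fun ω' => K ω ω' :=
              hdgood.mono fun ω' hd => hKpos ω ω' he hd
            have hKone : ∫ ω', K ω ω' ∂P' = 1 := by
              have hKfn : (fun ω' => K ω ω') = fun ω' => ∑ S ∈ (range N).powerset,
                  W S ω * D S ω' := by
                funext ω'; exact hKexp ω ω'
              rw [hKfn, integral_finset_sum _ fun S _ => (hDint S).const_mul (W S ω)]
              rw [Finset.sum_eq_single_of_mem ∅ (Finset.empty_mem_powerset _)]
              · simp [hWdef, hDdef]
              · intro S _ hne
                rw [integral_const_mul]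
                have hDz : ∫ ω', D S ω' ∂P' = 0 := by
                  simp only [hDdef]
                  exact hDzero S (Finset.nonempty_iff_ne_empty.2 hne)
                rw [hDz, mul_zero]
            calc ∫⁻ ω', ENNReal.ofReal (|f ω| * K ω ω') ∂P'
                = ∫⁻ ω', ENNReal.ofReal |f ω| * ENNReal.ofReal (K ω ω') ∂P' := by
                  refine lintegral_congr_ae (hKnn.mono fun ω' h => ?_)
                  show ENNReal.ofReal (|f ω| * K ω ω')
                      = ENNReal.ofReal |f ω| * ENNReal.ofReal (K ω ω')
                  rw [ENNReal.ofReal_mul (abs_nonneg _)]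
              _ = ENNReal.ofReal |f ω| * ∫⁻ ω', ENNReal.ofReal (K ω ω') ∂P' :=
                  lintegral_const_mul _ (ENNReal.measurable_ofReal.comp hKm1)
              _ = ENNReal.ofReal |f ω| * ENNReal.ofReal (∫ ω', K ω ω' ∂P') := by
                  rw [← ofReal_integral_eq_lintegral_ofReal hKint hKnn]
              _ = ENNReal.ofReal |f ω| := by rw [hKone, ENNReal.ofReal_one, mul_one]
              _ ≤ ENNReal.ofReal |f ω| := le_rfl
        _ = ∫⁻ ω, ‖f ω‖ₑ ∂P :=
            lintegral_congr fun ω => (Real.enorm_eq_ofReal_abs _).symm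
    exact ENNReal.toReal_mono (memLp_one_iff_integrable.2 hf).2.ne hmain
  -- difference bound
  have hdiffbound : ∀ (f : Ω → ℝ), Integrable f P → ∀ N M, N ≤ M →
      ‖U M f - U N f‖ ≤ (eLpNorm (fun ω => (P[f|mN M]) ω - (P[f|mN N]) ω) 1 P).toReal := by
    intro f hf N M hNM
    have h1 : U M f = U M (P[f|mN M]) := (hUcond M f hf).symm
    have h2 : U N f = U M (P[f|mN N]) := by
      rw [← hUcond N f hf]
      exact (hUconsist N M hNM _ integrable_condExp stronglyMeasurable_condExp).symm
    rw [h1, h2, ← hUsub M _ _ integrable_condExp integrable_condExp]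
    exact hUnorm M _ (integrable_condExp.sub integrable_condExp)
  -- Cauchy and limits
  have hcauchy : ∀ f : Lp ℝ 1 P, ∃ l : Lp ℝ 1 P',
      Tendsto (fun N => U N (f : Ω → ℝ)) atTop (𝓝 l) := by
    intro f
    have hfint : Integrable (f : Ω → ℝ) P := L1.integrable_coeFn f
    refine cauchySeq_tendsto_of_complete ?_
    rw [Metric.cauchySeq_iff']
    intro ε hε
    set G : Ω → ℝ := P[(f : Ω → ℝ)|⨆ n, ℱ n] with hGdef
    have h0 : Tendsto (fun N => eLpNorm ((P[(f : Ω → ℝ)|ℱ N]) - G) 1 P) atTop (𝓝 0) :=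
      MeasureTheory.tendsto_eLpNorm_condExp (μ := P) (ℱ := ℱ) (f : Ω → ℝ)
    have hlev : Tendsto (fun N => (eLpNorm ((P[(f : Ω → ℝ)|ℱ N]) - G) 1 P).toReal)
        atTop (𝓝 0) := by
      have := (ENNReal.tendsto_toReal (a := 0) (by simp)).comp h0
      simpa [Function.comp_def] using this
    have hev := hlev.eventually (gt_mem_nhds (half_pos hε))
    rw [eventually_atTop] at hev
    obtain ⟨N₀, hN₀⟩ := hev
    refine ⟨N₀, fun n hn => ?_⟩
    have hfin : ∀ k, eLpNorm ((P[(f : Ω → ℝ)|ℱ k]) - G) 1 P ≠ ⊤ := fun k =>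
      (memLp_one_iff_integrable.2 (integrable_condExp.sub integrable_condExp)).2.ne
    have hbound : ∀ a b, N₀ ≤ a → N₀ ≤ b → a ≤ b → dist (U b (f : Ω → ℝ)) (U a (f : Ω → ℝ)) < ε := by
      intro a b ha hb hab
      rw [dist_eq_norm]
      have h1 := hdiffbound (f : Ω → ℝ) hfint a b hab
      have htri : eLpNorm (fun ω => (P[(f : Ω → ℝ)|mN b]) ω - (P[(f : Ω → ℝ)|mN a]) ω) 1 P
          ≤ eLpNorm ((P[(f : Ω → ℝ)|ℱ b]) - G) 1 P + eLpNorm ((P[(f : Ω → ℝ)|ℱ a]) - G) 1 P := by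
        have heq : (fun ω => (P[(f : Ω → ℝ)|mN b]) ω - (P[(f : Ω → ℝ)|mN a]) ω)
            = ((P[(f : Ω → ℝ)|ℱ b]) - G) - ((P[(f : Ω → ℝ)|ℱ a]) - G) := by
          funext ω; simp [hGdef]; rfl
        rw [heq]
        exact eLpNorm_sub_le ((stronglyMeasurable_condExp.mono (hmNle b)).aestronglyMeasurable.sub
            (stronglyMeasurable_condExp.mono (iSup_le fun n => hmNle n)).aestronglyMeasurable)
          ((stronglyMeasurable_condExp.mono (hmNle a)).aestronglyMeasurable.sub
            (stronglyMeasurable_condExp.mono (iSup_le fun n => hmNle n)).aestronglyMeasurable)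
          le_rfl
      have h2 : (eLpNorm (fun ω => (P[(f : Ω → ℝ)|mN b]) ω - (P[(f : Ω → ℝ)|mN a]) ω) 1 P).toReal
          ≤ (eLpNorm ((P[(f : Ω → ℝ)|ℱ b]) - G) 1 P).toReal
            + (eLpNorm ((P[(f : Ω → ℝ)|ℱ a]) - G) 1 P).toReal := by
        refine le_trans (ENNReal.toReal_mono ?_ htri) ?_
        · exact ENNReal.add_ne_top.2 ⟨hfin b, hfin a⟩
        · rw [ENNReal.toReal_add (hfin b) (hfin a)]
      calc ‖U b (f : Ω → ℝ) - U a (f : Ω → ℝ)‖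
          ≤ (eLpNorm (fun ω => (P[(f : Ω → ℝ)|mN b]) ω - (P[(f : Ω → ℝ)|mN a]) ω) 1 P).toReal := h1
        _ ≤ (eLpNorm ((P[(f : Ω → ℝ)|ℱ b]) - G) 1 P).toReal
            + (eLpNorm ((P[(f : Ω → ℝ)|ℱ a]) - G) 1 P).toReal := h2
        _ < ε / 2 + ε / 2 := add_lt_add (hN₀ b (le_trans ha hab)) (hN₀ a ha)
        _ = ε := add_halves ε
    rcases le_total n N₀ with h | h
    · rw [dist_comm]
      exact hbound n N₀ hn le_rfl h
    · exact hbound N₀ n le_rfl hn h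
  choose Φ hΦ using hcauchy
  have hmapadd : ∀ f g : Lp ℝ 1 P, Φ (f + g) = Φ f + Φ g := by
    intro f g
    have h1 : ∀ N, U N ((f + g : Lp ℝ 1 P) : Ω → ℝ) = U N (f : Ω → ℝ) + U N (g : Ω → ℝ) := by
      intro N
      rw [hUcongr N (Lp.coeFn_add f g)]
      exact hUadd N _ _ (L1.integrable_coeFn f) (L1.integrable_coeFn g)
    refine tendsto_nhds_unique (hΦ (f + g)) ?_
    exact ((hΦ f).add (hΦ g)).congr fun N => (h1 N).symm
  have hmapsmul : ∀ (r : ℝ) (f : Lp ℝ 1 P), Φ (r • f) = r • Φ f := by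
    intro r f
    have h1 : ∀ N, U N ((r • f : Lp ℝ 1 P) : Ω → ℝ) = r • U N (f : Ω → ℝ) := by
      intro N
      rw [hUcongr N (Lp.coeFn_smul r f)]
      exact hUsmul N r _ (L1.integrable_coeFn f)
    refine tendsto_nhds_unique (hΦ (r • f)) ?_
    exact ((hΦ f).const_smul r).congr fun N => (h1 N).symm
  set T : Lp ℝ 1 P →ₗ[ℝ] Lp ℝ 1 P' :=
    { toFun := Φ, map_add' := hmapadd, map_smul' := hmapsmul } with hTdef
  have hTbound : ∀ f : Lp ℝ 1 P, ‖T f‖ ≤ 1 * ‖f‖ := by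
    intro f
    rw [one_mul]
    refine le_of_tendsto (hΦ f).norm (Eventually.of_forall fun N => ?_)
    calc ‖U N (f : Ω → ℝ)‖ ≤ (eLpNorm (f : Ω → ℝ) 1 P).toReal :=
          hUnorm N _ (L1.integrable_coeFn f)
      _ = ‖f‖ := (Lp.norm_def f).symm
  refine ⟨T.mkContinuous 1 hTbound, ?_, ?_, ?_⟩
  · -- norm equals one
    refine le_antisymm (T.mkContinuous_norm_le zero_le_one hTbound) ?_
    have hu1 : (T.mkContinuous 1 hTbound) ((memLp_const (1 : ℝ)).toLp (fun _ => (1:ℝ)))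
        = (memLp_const (1 : ℝ)).toLp (fun _ => (1:ℝ)) := by
      show Φ _ = _
      refine tendsto_nhds_unique (hΦ _) ?_
      refine tendsto_const_nhds.congr fun N => ?_
      rw [hUcongr N (MemLp.coeFn_toLp _), hU1 N]
    have hP : ‖((memLp_const (1 : ℝ)).toLp (fun _ => (1:ℝ)) : Lp ℝ 1 P)‖ = 1 := by
      rw [Lp.norm_toLp, eLpNorm_const _ one_ne_zero (IsProbabilityMeasure.ne_zero P)]
      simp
    have hP' : ‖((memLp_const (1 : ℝ)).toLp (fun _ => (1:ℝ)) : Lp ℝ 1 P')‖ = 1 := by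
      rw [Lp.norm_toLp, eLpNorm_const _ one_ne_zero (IsProbabilityMeasure.ne_zero P')]
      simp
    have h3 := (T.mkContinuous 1 hTbound).le_opNorm ((memLp_const (1 : ℝ)).toLp (fun _ => (1:ℝ)))
    rw [hu1, hP', hP, mul_one] at h3
    exact h3
  · show Φ _ = _
    refine tendsto_nhds_unique (hΦ _) ?_
    refine tendsto_const_nhds.congr fun N => ?_
    rw [hUcongr N (MemLp.coeFn_toLp _), hU1 N]
  · intro n
    show Φ _ = _
    refine tendsto_nhds_unique (hΦ _) ?_
    refine Tendsto.congr' ?_ tendsto_const_nhds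
    refine eventually_atTop.2 ⟨n + 1, fun N hN => ?_⟩
    show (hdmem n).toLp (dd n) = U N (((hemem n).toLp (e n) : Lp ℝ 1 P) : Ω → ℝ)
    rw [hUcongr N (MemLp.coeFn_toLp _), hUe N n hN]



end MDS12


open MeasureTheory ProbabilityTheory

/-- Let `(d_n)_{n ≥ 0}` be a real-valued martingale difference sequence on
`(Ω', 𝒜', P')` with `𝒜_0` trivial and `|d_n| ≤ 1` a.s., and let `(ε_n)_{n ≥ 1}` be an i.i.d.
sequence of Rademacher variables on `(Ω, 𝒜, P)`. Then there is a bounded linear operator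
`u : L¹(Ω, P) → L¹(Ω', P')` with `‖u‖ = 1`, `u(1) = 1` and `u(ε_n) = d_n` for all `n ≥ 1`;
i.e. every `[-1,1]`-valued martingale difference sequence is `1`-dominated by the Rademacher
sequence. -/
theorem mds_one_dominated_by_rademacher {Ω' : Type} [mΩ' : MeasurableSpace Ω']
    (P' : Measure Ω') [IsProbabilityMeasure P']
    {Ω : Type} [mΩ : MeasurableSpace Ω] (P : Measure Ω) [IsProbabilityMeasure P]
    (d : ℕ → Ω' → ℝ) (𝒜 : ℕ → MeasurableSpace Ω')
    (hmono : Monotone 𝒜) (hle : ∀ n, 𝒜 n ≤ mΩ') (htriv : 𝒜 0 = ⊥)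
    (hadapt : ∀ n, Measurable[𝒜 n] (d n))
    (hmds : ∀ n, P'[d (n + 1)|𝒜 n] =ᵐ[P'] 0)
    (hbdd : ∀ n, ∀ᵐ ω ∂P', |d n ω| ≤ 1)
    (hdmem : ∀ n, MemLp (d n) 1 P')
    (ε : ℕ → Ω → ℝ) (hεmeas : ∀ n, 1 ≤ n → Measurable (ε n))
    (hεindep : iIndepFun (fun n => ε (n + 1)) P)
    (hεdist : ∀ n, 1 ≤ n → P {ω | ε n ω = 1} = 1 / 2 ∧ P {ω | ε n ω = -1} = 1 / 2)
    (hεmem : ∀ n, MemLp (ε n) 1 P) :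
    ∃ u : Lp ℝ 1 P →L[ℝ] Lp ℝ 1 P',
      ‖u‖ = 1 ∧
      u ((memLp_const (1 : ℝ)).toLp (fun _ => (1 : ℝ)))
        = (memLp_const (1 : ℝ)).toLp (fun _ => (1 : ℝ)) ∧
      ∀ n, 1 ≤ n → u ((hεmem n).toLp (ε n)) = (hdmem n).toLp (d n) := by
  classical
  have hemeas : ∀ i, Measurable (ε (i + 1)) := fun i =>
    hεmeas (i + 1) (Nat.succ_le_succ (Nat.zero_le i))
  have hDzero : ∀ S : Finset ℕ, S.Nonempty → ∫ ω', ∏ i ∈ S, d (i + 1) ω' ∂P' = 0 :=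
    fun S hS => MDS12.mds_prod_integral hmono hle hadapt hmds hbdd
      (fun n => memLp_one_iff_integrable.1 (hdmem n)) S hS
  have hepm : ∀ i, ∀ᵐ ω ∂P, ε (i + 1) ω = 1 ∨ ε (i + 1) ω = -1 := fun i =>
    MDS12.pm_one_ae (hemeas i) (hεdist (i + 1) (Nat.succ_le_succ (Nat.zero_le i))).1
      (hεdist (i + 1) (Nat.succ_le_succ (Nat.zero_le i))).2
  have hezero : ∀ i, ∫ ω, ε (i + 1) ω ∂P = 0 := fun i =>
    MDS12.integral_pm_one (hemeas i) (memLp_one_iff_integrable.1 (hεmem (i + 1)))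
      (hεdist (i + 1) (Nat.succ_le_succ (Nat.zero_le i))).1
      (hεdist (i + 1) (Nat.succ_le_succ (Nat.zero_le i))).2
  obtain ⟨u, hnorm, h1, he⟩ := MDS12.key (fun i => d (i + 1)) (fun i => ε (i + 1))
    (fun i => (hadapt (i + 1)).mono (hle (i + 1)) le_rfl) (fun i => hbdd (i + 1)) hDzero
    hemeas hεindep hepm hezero (fun i => hεmem (i + 1)) (fun i => hdmem (i + 1))
  refine ⟨u, hnorm, h1, ?_⟩
  intro n hn
  obtain ⟨k, rfl⟩ : ∃ k, n = k + 1 := ⟨n - 1, (Nat.succ_pred_eq_of_pos hn).symm⟩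
  exact he k
end
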